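/- arXiv:0705.4153 — 3 statements merged into one kernel-verified Lean document; each statement's English description precedes it below -/
import Mathlib

section
/- In the model (c) preferential attachment graph process, fix k ≥ 1 distinct vertices s₁,…,s_k, and for each s ∈ {s₁,…,s_k} let E_s = ⋂_{i=1}^{n_s} {g(t_i,j_i) = s} be an intersection of attachment events with target s (for arbitrary choices of times t_i and edge indices j_i ∈ {1,…,m}). Then P(⋂_{i=1}^k E_{s_i}) ≤ ∏_{i=1}^k P(E_{s_i}); that is, the events E_{s₁},…,E_{s_k} are negatively correlated. -/
open MeasureTheory Filter
open scoped ENNReal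

namespace PA

/-- The degree of vertex `i` at time `t` in the model (c) preferential attachment graph,
encoded by the attachment function `g`, where for `s ≥ 3` and `j < m`, `g s j` is the
vertex that the `j`-th edge of vertex `s` attaches to. Vertices `1` and `2` start with
`2m` edges between them. -/
def degree (m : ℕ) (g : ℕ → ℕ → ℕ) (i t : ℕ) : ℕ :=
  (if i ≤ 2 then 2 * m else m) +
    ((Finset.Ioc (max i 2) t ×ˢ Finset.range m).filter fun p => g p.1 p.2 = i).card

/-- `IsPAc m δ μ` states that `μ` is the law of the model (c) preferential attachment
process `{G_{m,δ}(t)}`, encoded through the attachment function `g : ℕ → ℕ → ℕ`: the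
finite-dimensional distributions are given by the product of the conditional attachment
probabilities `(D_i(s-1) + δ) / ((s-1)(2m + δ))`. -/
def IsPAc (m : ℕ) (δ : ℝ) (μ : Measure (ℕ → ℕ → ℕ)) : Prop :=
  IsProbabilityMeasure μ ∧
    ∀ t : ℕ, 2 ≤ t → ∀ h : ℕ → ℕ → ℕ,
      μ {g | ∀ s ∈ Finset.Ioc 2 t, ∀ j ∈ Finset.range m, g s j = h s j} =
        ∏ s ∈ Finset.Ioc 2 t, ∏ j ∈ Finset.range m,
          (if h s j ∈ Finset.Icc 1 (s - 1) then
            ENNReal.ofReal (((degree m h (h s j) (s - 1) : ℝ) + δ) /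
              (((s : ℝ) - 1) * (2 * m + δ)))
          else 0)

/-- The (simple) graph `G_{m,δ}(t)` on vertex set `[t] = {1,…,t}` determined by the
attachment function `g`. -/
def PAGraph (m : ℕ) (g : ℕ → ℕ → ℕ) (t : ℕ) : SimpleGraph ℕ where
  Adj a b := a ≠ b ∧ a ∈ Finset.Icc 1 t ∧ b ∈ Finset.Icc 1 t ∧
    ((a = 1 ∧ b = 2) ∨ (a = 2 ∧ b = 1) ∨
      (3 ≤ a ∧ ∃ j < m, g a j = b) ∨ (3 ≤ b ∧ ∃ j < m, g b j = a))
  symm := by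
    constructor
    rintro a b ⟨hab, ha, hb, h⟩
    refine ⟨hab.symm, hb, ha, ?_⟩
    rcases h with h | h | h | h
    · exact Or.inr (Or.inl ⟨h.2, h.1⟩)
    · exact Or.inl ⟨h.2, h.1⟩
    · exact Or.inr (Or.inr (Or.inr h))
    · exact Or.inr (Or.inr (Or.inl h))
  loopless := by constructor; rintro a ⟨hne, -⟩; exact hne rfl

/-- The diameter of `G_{m,δ}(t)`: the supremum of the graph distances over pairs of
vertices at finite distance from each other. -/
noncomputable def diam (m : ℕ) (g : ℕ → ℕ → ℕ) (t : ℕ) : ℝ≥0∞ :=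
  ⨆ (a : ℕ) (b : ℕ) (_ : (PAGraph m g t).Reachable a b),
    ((PAGraph m g t).edist a b : ℝ≥0∞)

/-- The core: vertices in `[t]` whose degree at time `t` is at least `(log t)^σ`. -/
noncomputable def core (m : ℕ) (σ : ℝ) (g : ℕ → ℕ → ℕ) (t : ℕ) : Finset ℕ :=
  (Finset.Icc 1 t).filter fun i => (Real.log t) ^ σ ≤ (degree m g i t : ℝ)

/-- The inner core: vertices in `[t]` whose degree at time `t` is at least
`u₁ = t^{1/(2(τ-1))} (log t)^{-1/2}`. -/
noncomputable def inner (m : ℕ) (τ : ℝ) (g : ℕ → ℕ → ℕ) (t : ℕ) : Finset ℕ :=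
  (Finset.Icc 1 t).filter fun i =>
    (t : ℝ) ^ (1 / (2 * (τ - 1))) * (Real.log t) ^ (-(1:ℝ)/2) ≤ (degree m g i t : ℝ)

end PA

namespace NC

noncomputable instance : DecidableEq (ℕ → ℕ → ℕ) := Classical.decEq _

variable (m : ℕ)

/-- linear position `n` ↦ pair (time, edge index) -/
def tpos (n : ℕ) : ℕ × ℕ := (3 + n / m, n % m)

/-- pair ↦ linear position -/
def idx (p : ℕ × ℕ) : ℕ := (p.1 - 3) * m + p.2

lemma tpos_fst (n : ℕ) : (tpos m n).1 = 3 + n / m := rfl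
lemma tpos_snd (n : ℕ) : (tpos m n).2 = n % m := rfl

lemma tpos_inj (hm : 1 ≤ m) : Function.Injective (tpos m) := by
  intro a b h
  have h1 : a / m = b / m := by
    have := congrArg Prod.fst h
    simpa [tpos] using this
  have h2 : a % m = b % m := congrArg Prod.snd h
  have ha := Nat.div_add_mod a m
  have hb := Nat.div_add_mod b m
  rw [h1, h2] at ha
  omega

lemma tpos_idx (hm : 1 ≤ m) {p : ℕ × ℕ} (h3 : 3 ≤ p.1) (hj : p.2 < m) :
    tpos m (idx m p) = p := by
  have hm0 : 0 < m := hm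
  have hdiv : (p.2 + (p.1 - 3) * m) / m = p.1 - 3 := by
    rw [Nat.add_mul_div_right _ _ hm0, Nat.div_eq_of_lt hj, Nat.zero_add]
  have hmod : (p.2 + (p.1 - 3) * m) % m = p.2 := by
    rw [Nat.add_mul_mod_self_right, Nat.mod_eq_of_lt hj]
  have hc : idx m p = p.2 + (p.1 - 3) * m := by unfold idx; omega
  have : tpos m (idx m p) = (3 + (p.1 - 3), p.2) := by
    unfold tpos; rw [hc, hdiv, hmod]
  rw [this]
  have : 3 + (p.1 - 3) = p.1 := by omega
  rw [this]

lemma idx_tpos (hm : 1 ≤ m) (a : ℕ) : idx m (tpos m a) = a := by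
  have hm0 : 0 < m := hm
  unfold idx tpos
  simp only
  rw [Nat.add_sub_cancel_left]
  have := Nat.div_add_mod a m
  have h2 : m * (a / m) = (a / m) * m := Nat.mul_comm _ _
  omega

lemma idx_lt (hm : 1 ≤ m) {p : ℕ × ℕ} {n : ℕ} (h3 : 3 ≤ p.1) (hle : p.1 ≤ 2 + n / m)
    (hj : p.2 < m) : idx m p < n := by
  have hm0 : 0 < m := hm
  have h1 : 1 ≤ n / m := by
    by_contra hcon
    push_neg at hcon
    interval_cases h : n / m <;> omega
  have h2 : p.1 - 3 + 1 ≤ n / m := by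
    have := hle; omega

  have : idx m p < (p.1 - 3 + 1) * m := by
    unfold idx; nlinarith
  have h4 : (p.1 - 3 + 1) * m ≤ (n / m) * m := Nat.mul_le_mul_right _ h2
  have h5 : (n / m) * m ≤ n := Nat.div_mul_le_self n m
  omega

lemma div_le_div_of_lt {a n : ℕ} (h : a < n) : a / m ≤ n / m :=
  Nat.div_le_div_right (le_of_lt h)

end NC
namespace NC

variable (m : ℕ) (δ : ℝ)

/-- update a two-argument function at a pair position -/
def upd (h : ℕ → ℕ → ℕ) (p : ℕ × ℕ) (v : ℕ) : ℕ → ℕ → ℕ :=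
  fun u j => if u = p.1 ∧ j = p.2 then v else h u j

lemma upd_same (h : ℕ → ℕ → ℕ) (p : ℕ × ℕ) (v : ℕ) : upd h p v p.1 p.2 = v := by
  simp [upd]

lemma upd_ne (h : ℕ → ℕ → ℕ) (p : ℕ × ℕ) (v : ℕ) {u j : ℕ} (hne : (u, j) ≠ p) :
    upd h p v u j = h u j := by
  have : ¬(u = p.1 ∧ j = p.2) := by
    rintro ⟨h1, h2⟩; exact hne (Prod.ext h1 h2)
  simp [upd, this]

/-- one factor of the finite-dimensional density, at pair position `p` -/
noncomputable def step (h : ℕ → ℕ → ℕ) (p : ℕ × ℕ) : ℝ≥0∞ :=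
  if h p.1 p.2 ∈ Finset.Icc 1 (p.1 - 1) then
    ENNReal.ofReal (((PA.degree m h (h p.1 p.2) (p.1 - 1) : ℝ) + δ) /
      (((p.1 : ℝ) - 1) * (2 * m + δ)))
  else 0

/-- total weight of the first `n` linear positions -/
noncomputable def W (n : ℕ) (h : ℕ → ℕ → ℕ) : ℝ≥0∞ :=
  ∏ a ∈ Finset.range n, step m δ h (tpos m a)

/-- the finite set of valid assignments on the first `n` linear positions -/
noncomputable def F : ℕ → Finset (ℕ → ℕ → ℕ)
  | 0 => {fun _ _ => 0}
  | (n + 1) => ((F n) ×ˢ Finset.Icc 1 (2 + n / m)).image fun q => upd q.1 (tpos m n) q.2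

/-- compatibility of `h` with a finite constraint set -/
def cOK (C : Finset ((ℕ × ℕ) × ℕ)) (h : ℕ → ℕ → ℕ) : Prop :=
  ∀ c ∈ C, h c.1.1 c.1.2 = c.2

instance (C : Finset ((ℕ × ℕ) × ℕ)) (h : ℕ → ℕ → ℕ) : Decidable (cOK C h) := by
  unfold cOK; infer_instance

/-- constrained partition function on the first `n` positions -/
noncomputable def S (n : ℕ) (C : Finset ((ℕ × ℕ) × ℕ)) : ℝ≥0∞ :=
  ∑ h ∈ F m n, if cOK C h then W m δ n h else 0

/-- the characterization of members of `F` -/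
def ch (n : ℕ) (h : ℕ → ℕ → ℕ) : Prop :=
  (∀ a < n, h (tpos m a).1 (tpos m a).2 ∈ Finset.Icc 1 (2 + a / m)) ∧
    ∀ u j : ℕ, (∀ a < n, tpos m a ≠ (u, j)) → h u j = 0

lemma pair_eta (p : ℕ × ℕ) : (p.1, p.2) = p := rfl

lemma upd_ne' (h : ℕ → ℕ → ℕ) (p q : ℕ × ℕ) (v : ℕ) (hne : q ≠ p) :
    upd h p v q.1 q.2 = h q.1 q.2 := upd_ne h p v (by rwa [pair_eta])

lemma tpos_ne (hm : 1 ≤ m) {a b : ℕ} (hab : a ≠ b) : tpos m a ≠ tpos m b :=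
  fun hcon => hab (tpos_inj m hm hcon)

lemma mem_F_iff (hm : 1 ≤ m) {n : ℕ} {h : ℕ → ℕ → ℕ} : h ∈ F m n ↔ ch m n h := by
  induction n generalizing h with
  | zero =>
    simp only [F, Finset.mem_singleton, ch]
    constructor
    · rintro rfl
      exact ⟨fun a ha => by omega, fun u j _ => rfl⟩
    · rintro ⟨-, h2⟩
      funext u j
      exact h2 u j (fun a ha => by omega)
  | succ n ih =>
    simp only [F, Finset.mem_image, Finset.mem_product]
    constructor
    · rintro ⟨⟨h0, v⟩, ⟨hh0, hv⟩, hupd⟩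
      simp only at hh0 hv hupd
      subst hupd
      have hch := ih.mp hh0
      simp only [Finset.mem_Icc] at hv
      constructor
      · intro a ha
        rcases Nat.lt_succ_iff_lt_or_eq.mp ha with ha' | ha'
        · rw [upd_ne' _ _ _ _ (tpos_ne m hm (by omega))]
          exact hch.1 a ha'
        · subst ha'
          rw [upd_same]
          simp only [Finset.mem_Icc]
          omega
      · intro u j hav
        rw [upd_ne _ _ _ (fun hcon => hav n (Nat.lt_succ_self n) hcon.symm)]
        exact hch.2 u j (fun a ha => hav a (Nat.lt_succ_of_lt ha))
    · rintro ⟨h1, h2⟩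
      refine ⟨⟨upd h (tpos m n) 0, h (tpos m n).1 (tpos m n).2⟩, ⟨?_, ?_⟩, ?_⟩
      · simp only
        apply ih.mpr
        constructor
        · intro a ha
          rw [upd_ne' _ _ _ _ (tpos_ne m hm (by omega))]
          exact h1 a (Nat.lt_succ_of_lt ha)
        · intro u j hav
          by_cases hp : (u, j) = tpos m n
          · rw [← hp]
            exact upd_same h (u, j) 0
          · rw [upd_ne _ _ _ hp]
            refine h2 u j (fun a ha => ?_)
            rcases Nat.lt_succ_iff_lt_or_eq.mp ha with ha' | ha'
            · exact hav a ha'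
            · subst ha'; exact fun hcon => hp hcon.symm
      · simp only [Finset.mem_Icc]
        have := h1 n (Nat.lt_succ_self n)
        simpa using this
      · simp only
        funext u j
        by_cases hp : (u, j) = tpos m n
        · rw [← hp]
          exact upd_same _ _ _
        · rw [upd_ne _ _ _ hp, upd_ne _ _ _ hp]

lemma F_valid (hm : 1 ≤ m) {n : ℕ} {h : ℕ → ℕ → ℕ} (hh : h ∈ F m n) {a : ℕ} (ha : a < n) :
    h (tpos m a).1 (tpos m a).2 ∈ Finset.Icc 1 (2 + a / m) :=
  ((mem_F_iff m hm).mp hh).1 a ha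

lemma F_zero (hm : 1 ≤ m) {n : ℕ} {h : ℕ → ℕ → ℕ} (hh : h ∈ F m n) {u j : ℕ}
    (hav : ∀ a < n, tpos m a ≠ (u, j)) : h u j = 0 :=
  ((mem_F_iff m hm).mp hh).2 u j hav

end NC
namespace NC

variable (m : ℕ) (δ : ℝ)

lemma degree_upd (h : ℕ → ℕ → ℕ) (p : ℕ × ℕ) (v w t' : ℕ) (hp : t' < p.1) :
    PA.degree m (upd h p v) w t' = PA.degree m h w t' := by
  unfold PA.degree
  congr 1
  apply congrArg Finset.card
  apply Finset.filter_congr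
  intro q hq
  simp only [Finset.mem_product, Finset.mem_Ioc, Finset.mem_range] at hq
  rw [upd_ne' h p q v (fun hcon => by subst hcon; omega)]

lemma degree_base_le (h : ℕ → ℕ → ℕ) (w t' : ℕ) : m ≤ PA.degree m h w t' := by
  unfold PA.degree
  have : m ≤ (if w ≤ 2 then 2 * m else m) := by split <;> omega
  omega

lemma twom_pos (hm : 1 ≤ m) (hδ : -(m : ℝ) < δ) : (0 : ℝ) < 2 * m + δ := by
  have : (1 : ℝ) ≤ m := by exact_mod_cast hm
  linarith

lemma deg_pos (hm : 1 ≤ m) (hδ : -(m : ℝ) < δ) (h : ℕ → ℕ → ℕ) (w t' : ℕ) :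
    (0 : ℝ) < (PA.degree m h w t' : ℝ) + δ := by
  have h1 : (m : ℝ) ≤ (PA.degree m h w t' : ℝ) := by exact_mod_cast degree_base_le m h w t'
  have : (1 : ℝ) ≤ m := by exact_mod_cast hm
  linarith

lemma W_upd (hm : 1 ≤ m) (n : ℕ) (h : ℕ → ℕ → ℕ) (v : ℕ) :
    W m δ n (upd h (tpos m n) v) = W m δ n h := by
  unfold W
  apply Finset.prod_congr rfl
  intro a ha
  simp only [Finset.mem_range] at ha
  unfold step
  rw [upd_ne' _ _ _ _ (tpos_ne m hm (by omega))]
  have hlt : (tpos m a).1 - 1 < (tpos m n).1 := by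
    rw [tpos_fst, tpos_fst]
    have hdiv : a / m ≤ n / m := Nat.div_le_div_right (le_of_lt ha)
    generalize a / m = x at hdiv ⊢
    generalize n / m = y at hdiv ⊢
    omega
  rw [degree_upd _ _ _ _ _ _ hlt]

lemma sum_degree (hm : 1 ≤ m) {n : ℕ} {h : ℕ → ℕ → ℕ} (hh : h ∈ F m n) :
    ∑ v ∈ Finset.Icc 1 (2 + n / m), PA.degree m h v (2 + n / m)
      = 2 * m * (2 + n / m) := by
  unfold PA.degree
  rw [Finset.sum_add_distrib]
  have hbase : ∑ v ∈ Finset.Icc 1 (2 + n / m), (if v ≤ 2 then 2 * m else m)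
      = m * (2 + n / m) + 2 * m := by
    have hsplit : ∀ v ∈ Finset.Icc 1 (2 + n / m), (if v ≤ 2 then 2 * m else m)
        = m + (if v ≤ 2 then m else 0) := by
      intro v _; split <;> omega
    rw [Finset.sum_congr rfl hsplit, Finset.sum_add_distrib, Finset.sum_const,
      Nat.card_Icc, ← Finset.sum_filter]
    have hf : (Finset.Icc 1 (2 + n / m)).filter (fun v => v ≤ 2) = Finset.Icc 1 2 := by
      ext v
      simp only [Finset.mem_filter, Finset.mem_Icc]
      generalize n / m = y
      omega
    rw [hf, Finset.sum_const, Nat.card_Icc]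
    simp only [smul_eq_mul]
    have e1 : 2 + n / m + 1 - 1 = 2 + n / m := by generalize n / m = y; omega
    have e2 : 2 + 1 - 1 = 2 := by omega
    rw [e1, e2]
    generalize n / m = q
    ring
  rw [hbase]
  have hcnt : ∑ v ∈ Finset.Icc 1 (2 + n / m),
      ((Finset.Ioc (max v 2) (2 + n / m) ×ˢ Finset.range m).filter
        fun p => h p.1 p.2 = v).card
      = (n / m) * m := by
    have hre : ∀ v ∈ Finset.Icc 1 (2 + n / m),
        ((Finset.Ioc (max v 2) (2 + n / m) ×ˢ Finset.range m).filter
          fun p => h p.1 p.2 = v).card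
        = ∑ q ∈ Finset.Ioc 2 (2 + n / m) ×ˢ Finset.range m,
            (if h q.1 q.2 = v ∧ v < q.1 then 1 else 0) := by
      intro v _
      have hfe : ((Finset.Ioc 2 (2 + n / m) ×ˢ Finset.range m).filter
            fun q => h q.1 q.2 = v ∧ v < q.1)
          = ((Finset.Ioc (max v 2) (2 + n / m) ×ˢ Finset.range m).filter
            fun p => h p.1 p.2 = v) := by
        ext q
        simp only [Finset.mem_filter, Finset.mem_product, Finset.mem_Ioc, Finset.mem_range,
          max_lt_iff]
        tauto
      rw [← hfe, Finset.card_filter]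
    rw [Finset.sum_congr rfl hre, Finset.sum_comm]
    have hone : ∀ q ∈ Finset.Ioc 2 (2 + n / m) ×ˢ Finset.range m,
        ∑ v ∈ Finset.Icc 1 (2 + n / m), (if h q.1 q.2 = v ∧ v < q.1 then 1 else 0) = 1 := by
      intro q hq
      simp only [Finset.mem_product, Finset.mem_Ioc, Finset.mem_range] at hq
      have hq3 : 3 ≤ q.1 := hq.1.1
      have hq2 : q.2 < m := hq.2
      have hqle : q.1 ≤ 2 + n / m := hq.1.2
      have hidx : tpos m (idx m q) = q := tpos_idx m hm hq3 hq2
      have hlt : idx m q < n := idx_lt m hm hq3 hqle hq2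
      have hval := F_valid m hm hh hlt
      rw [hidx] at hval
      have hdm : 2 + idx m q / m = q.1 - 1 := by
        have := congrArg Prod.fst hidx
        rw [tpos_fst] at this
        omega
      rw [hdm] at hval
      simp only [Finset.mem_Icc] at hval
      have hmem : h q.1 q.2 ∈ Finset.Icc 1 (2 + n / m) := by
        simp only [Finset.mem_Icc]
        generalize n / m = y at hqle ⊢
        omega
      have hoth : ∀ v ∈ Finset.Icc 1 (2 + n / m), v ≠ h q.1 q.2 →
          (if h q.1 q.2 = v ∧ v < q.1 then 1 else 0) = 0 := by
        intro v _ hv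
        rw [if_neg (fun hc => hv hc.1.symm)]
      rw [Finset.sum_eq_single_of_mem (h q.1 q.2) hmem hoth, if_pos ⟨rfl, by omega⟩]
    rw [Finset.sum_congr rfl hone, Finset.sum_const, smul_eq_mul, mul_one,
      Finset.card_product, Nat.card_Ioc, Finset.card_range]
    generalize n / m = q
    have e : 2 + q - 2 = q := by omega
    rw [e]
  rw [hcnt]
  generalize n / m = q
  ring
end NC
namespace NC

variable (m : ℕ) (δ : ℝ)

lemma tpos_fst_sub (n : ℕ) : (tpos m n).1 - 1 = 2 + n / m := by
  rw [tpos_fst]; generalize n / m = q; omega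

lemma tpos_fst_lt (n : ℕ) : 2 + n / m < (tpos m n).1 := by
  rw [tpos_fst]; generalize n / m = q; omega

lemma tpos_fst_cast (n : ℕ) : (((tpos m n).1 : ℝ)) - 1 = ((2 + n / m : ℕ) : ℝ) := by
  rw [tpos_fst]; push_cast; ring

lemma sum_step (hm : 1 ≤ m) (hδ : -(m : ℝ) < δ) {n : ℕ} {h : ℕ → ℕ → ℕ}
    (hh : h ∈ F m n) :
    ∑ v ∈ Finset.Icc 1 (2 + n / m), step m δ (upd h (tpos m n) v) (tpos m n) = 1 := by
  have hD : (0 : ℝ) < ((2 + n / m : ℕ) : ℝ) * (2 * m + δ) := by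
    apply mul_pos
    · have h2 : 0 < 2 + n / m := Nat.lt_of_lt_of_le (by norm_num) (Nat.le_add_right 2 (n / m))
      exact_mod_cast h2
    · exact twom_pos m δ hm hδ
  have hstep : ∀ v ∈ Finset.Icc 1 (2 + n / m),
      step m δ (upd h (tpos m n) v) (tpos m n)
      = ENNReal.ofReal (((PA.degree m h v (2 + n / m) : ℝ) + δ)
          / (((2 + n / m : ℕ) : ℝ) * (2 * m + δ))) := by
    intro v hv
    unfold step
    rw [upd_same, tpos_fst_sub, if_pos hv,
      degree_upd _ _ _ _ _ _ (tpos_fst_lt m n), tpos_fst_cast]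
  rw [Finset.sum_congr rfl hstep]
  rw [← ENNReal.ofReal_sum_of_nonneg (fun v _ => div_nonneg
    (le_of_lt (deg_pos m δ hm hδ h v _)) (le_of_lt hD))]
  rw [← Finset.sum_div]
  have hsum : ∑ v ∈ Finset.Icc 1 (2 + n / m), ((PA.degree m h v (2 + n / m) : ℝ) + δ)
      = ((2 + n / m : ℕ) : ℝ) * (2 * m + δ) := by
    rw [Finset.sum_add_distrib, Finset.sum_const, Nat.card_Icc]
    have hcast : ∑ v ∈ Finset.Icc 1 (2 + n / m), ((PA.degree m h v (2 + n / m) : ℝ))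
        = ((2 * m * (2 + n / m) : ℕ) : ℝ) := by
      rw [← Nat.cast_sum, sum_degree m hm hh]
    rw [hcast]
    have e1 : 2 + n / m + 1 - 1 = 2 + n / m := by generalize n / m = q; omega
    rw [e1]
    push_cast
    ring
  rw [hsum, div_self (ne_of_gt hD), ENNReal.ofReal_one]

lemma S_succ (hm : 1 ≤ m) (n : ℕ) (C : Finset ((ℕ × ℕ) × ℕ)) :
    S m δ (n + 1) C = ∑ h ∈ F m n, ∑ v ∈ Finset.Icc 1 (2 + n / m),
      (if cOK C (upd h (tpos m n) v) then
        W m δ n h * step m δ (upd h (tpos m n) v) (tpos m n) else 0) := by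
  unfold S
  have hF : F m (n + 1)
      = ((F m n) ×ˢ Finset.Icc 1 (2 + n / m)).image fun q => upd q.1 (tpos m n) q.2 := rfl
  rw [hF, Finset.sum_image ?hinj, Finset.sum_product]
  case hinj =>
    intro q1 hq1 q2 hq2 heq
    simp only [Finset.mem_coe, Finset.coe_product, Set.mem_prod, Finset.mem_product] at hq1 hq2 heq
    have hv : q1.2 = q2.2 := by
      have := congrFun (congrFun heq (tpos m n).1) (tpos m n).2
      rwa [upd_same, upd_same] at this
    have hfun : q1.1 = q2.1 := by
      funext u j
      by_cases hp : (u, j) = tpos m n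
      · have hz1 : q1.1 u j = 0 := F_zero m hm hq1.1
          (fun a ha hcon => absurd (hcon.trans hp) (tpos_ne m hm (by omega)))
        have hz2 : q2.1 u j = 0 := F_zero m hm hq2.1
          (fun a ha hcon => absurd (hcon.trans hp) (tpos_ne m hm (by omega)))
        rw [hz1, hz2]
      · have := congrFun (congrFun heq u) j
        rwa [upd_ne _ _ _ hp, upd_ne _ _ _ hp] at this
    exact Prod.ext hfun hv
  apply Finset.sum_congr rfl
  intro h _
  apply Finset.sum_congr rfl
  intro v _
  congr 1
  unfold W
  rw [Finset.prod_range_succ]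
  congr 1
  exact (W_upd m δ hm n h v)

lemma cOK_upd (hm : 1 ≤ m) {C : Finset ((ℕ × ℕ) × ℕ)} {h : ℕ → ℕ → ℕ} {n v : ℕ}
    (hav : ∀ c ∈ C, c.1 ≠ tpos m n) :
    cOK C (upd h (tpos m n) v) ↔ cOK C h := by
  unfold cOK
  apply forall₂_congr
  intro c hc
  rw [upd_ne' _ _ _ _ (hav c hc)]

lemma cOK_insert {c : (ℕ × ℕ) × ℕ} {C : Finset ((ℕ × ℕ) × ℕ)} {h : ℕ → ℕ → ℕ} :
    cOK (insert c C) h ↔ h c.1.1 c.1.2 = c.2 ∧ cOK C h := Finset.forall_mem_insert _ _ _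

lemma S_stable (hm : 1 ≤ m) (hδ : -(m : ℝ) < δ) (n : ℕ) (C : Finset ((ℕ × ℕ) × ℕ))
    (hC : ∀ c ∈ C, ∃ a < n, c.1 = tpos m a) :
    S m δ (n + 1) C = S m δ n C := by
  rw [S_succ m δ hm n C]
  have hav : ∀ c ∈ C, c.1 ≠ tpos m n := by
    intro c hc
    obtain ⟨a, ha, hca⟩ := hC c hc
    rw [hca]
    exact tpos_ne m hm (by omega)
  unfold S
  apply Finset.sum_congr rfl
  intro h hh
  have hcong : ∀ v ∈ Finset.Icc 1 (2 + n / m),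
      (if cOK C (upd h (tpos m n) v) then
        W m δ n h * step m δ (upd h (tpos m n) v) (tpos m n) else 0)
      = (if cOK C h then W m δ n h * step m δ (upd h (tpos m n) v) (tpos m n) else 0) := by
    intro v _
    simp only [cOK_upd m hm hav]
  rw [Finset.sum_congr rfl hcong]
  by_cases hc : cOK C h
  · simp only [if_pos hc]
    rw [← Finset.mul_sum, sum_step m δ hm hδ hh, mul_one]
  · simp only [if_neg hc, Finset.sum_const_zero]

lemma S_empty (hm : 1 ≤ m) (hδ : -(m : ℝ) < δ) (n : ℕ) : S m δ n ∅ = 1 := by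
  induction n with
  | zero => simp [S, F, cOK, W]
  | succ n ih =>
    rw [S_stable m δ hm hδ n ∅ (by simp), ih]

lemma cOK_mono {C D : Finset ((ℕ × ℕ) × ℕ)} (hsub : C ⊆ D) {h : ℕ → ℕ → ℕ}
    (hD : cOK D h) : cOK C h := fun c hc => hD c (hsub hc)

lemma S_mono (n : ℕ) {C D : Finset ((ℕ × ℕ) × ℕ)} (hsub : C ⊆ D) :
    S m δ n D ≤ S m δ n C := by
  apply Finset.sum_le_sum
  intro h _
  by_cases hd : cOK D h
  · rw [if_pos hd, if_pos (cOK_mono hsub hd)]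
  · rw [if_neg hd]
    exact zero_le

lemma S_conflict (n : ℕ) {C : Finset ((ℕ × ℕ) × ℕ)} {c1 c2 : (ℕ × ℕ) × ℕ}
    (hc1 : c1 ∈ C) (hc2 : c2 ∈ C) (hpos : c1.1 = c2.1) (htgt : c1.2 ≠ c2.2) :
    S m δ n C = 0 := by
  apply Finset.sum_eq_zero
  intro h _
  rw [if_neg]
  intro hOK
  have e1 := hOK c1 hc1
  have e2 := hOK c2 hc2
  rw [hpos] at e1
  exact htgt (e1.symm.trans e2)

lemma S_invalid (hm : 1 ≤ m) (n : ℕ) {C : Finset ((ℕ × ℕ) × ℕ)} {c : (ℕ × ℕ) × ℕ}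
    (hc : c ∈ C) {a : ℕ} (ha : a < n) (hpos : c.1 = tpos m a)
    (hbad : c.2 ∉ Finset.Icc 1 (2 + a / m)) : S m δ n C = 0 := by
  apply Finset.sum_eq_zero
  intro h hh
  rw [if_neg]
  intro hOK
  have e1 := hOK c hc
  have hval := F_valid m hm hh ha
  rw [← hpos] at hval
  rw [e1] at hval
  exact hbad hval

end NC
namespace NC

variable (m : ℕ) (δ : ℝ)

/-- the window of pair positions whose attachments count towards the degree of `s`
at time `t'` -/
def win (s t' : ℕ) : Finset (ℕ × ℕ) := Finset.Ioc (max s 2) t' ×ˢ Finset.range m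

lemma step_upd_top {n v : ℕ} (hv : v ∈ Finset.Icc 1 (2 + n / m)) (h : ℕ → ℕ → ℕ) :
    step m δ (upd h (tpos m n) v) (tpos m n)
      = ENNReal.ofReal (((PA.degree m h v (2 + n / m) : ℝ) + δ)
          / (((2 + n / m : ℕ) : ℝ) * (2 * m + δ))) := by
  unfold step
  rw [upd_same, tpos_fst_sub, if_pos hv,
    degree_upd _ _ _ _ _ _ (tpos_fst_lt m n), tpos_fst_cast]

lemma degree_split (hm : 1 ≤ m) {n : ℕ} {h : ℕ → ℕ → ℕ} {C' : Finset ((ℕ × ℕ) × ℕ)}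
    (hfun : ∀ c ∈ C', ∀ c' ∈ C', c.1 = c'.1 → c.2 = c'.2)
    (hOK : cOK C' h) (s : ℕ) :
    PA.degree m h s (2 + n / m)
      = ((if s ≤ 2 then 2 * m else m)
          + (C'.filter fun c => c.1 ∈ win m s (2 + n / m) ∧ c.2 = s).card)
        + (((win m s (2 + n / m) \ C'.image Prod.fst).filter
            fun q => h q.1 q.2 = s).card) := by
  have hdef : PA.degree m h s (2 + n / m)
      = (if s ≤ 2 then 2 * m else m)
        + ((win m s (2 + n / m)).filter fun q => h q.1 q.2 = s).card := rfl
  rw [hdef]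
  have hsplit := Finset.card_filter_add_card_filter_not
    (s := (win m s (2 + n / m)).filter fun q => h q.1 q.2 = s)
    (p := fun q => q ∈ C'.image Prod.fst)
  have hfree : ((win m s (2 + n / m)).filter fun q => h q.1 q.2 = s).filter
        (fun q => ¬ q ∈ C'.image Prod.fst)
      = (win m s (2 + n / m) \ C'.image Prod.fst).filter fun q => h q.1 q.2 = s := by
    ext q
    simp only [Finset.mem_filter, Finset.mem_sdiff]
    tauto
  have hcon : (((win m s (2 + n / m)).filter fun q => h q.1 q.2 = s).filter
        (fun q => q ∈ C'.image Prod.fst)).card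
      = (C'.filter fun c => c.1 ∈ win m s (2 + n / m) ∧ c.2 = s).card := by
    apply Finset.card_bij' (fun q _ => (q, s)) (fun c _ => c.1)
    · intro q hq
      simp only [Finset.mem_filter, Finset.mem_image] at hq
      obtain ⟨⟨hwin, hval⟩, c, hc, hc1⟩ := hq
      have hc2 : c.2 = s := by
        have := hOK c hc
        rw [hc1] at this
        rw [← this, hval]
      have : c = (q, s) := by
        rw [← hc1, ← hc2]
      rw [← this]
      simp only [Finset.mem_filter]
      exact ⟨hc, by rw [hc1]; exact ⟨hwin, hc2⟩⟩
    · intro c hc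
      simp only [Finset.mem_filter] at hc
      obtain ⟨hcC, hwin, hc2⟩ := hc
      simp only [Finset.mem_filter, Finset.mem_image]
      refine ⟨⟨hwin, ?_⟩, c, hcC, rfl⟩
      rw [hOK c hcC, hc2]
    · intro q hq
      rfl
    · intro c hc
      simp only [Finset.mem_filter] at hc
      exact Prod.ext rfl hc.2.2.symm
  rw [hfree, hcon] at hsplit
  omega

lemma S_peel (hm : 1 ≤ m) (hδ : -(m : ℝ) < δ) (n : ℕ) (C' : Finset ((ℕ × ℕ) × ℕ))
    (hC' : ∀ c ∈ C', ∃ a < n, c.1 = tpos m a)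
    (hfun : ∀ c ∈ C', ∀ c' ∈ C', c.1 = c'.1 → c.2 = c'.2)
    (s : ℕ) (hs : s ∈ Finset.Icc 1 (2 + n / m)) :
    S m δ (n + 1) (insert (tpos m n, s) C')
      = ENNReal.ofReal (((((if s ≤ 2 then 2 * m else m)
            + (C'.filter fun c => c.1 ∈ win m s (2 + n / m) ∧ c.2 = s).card : ℕ) : ℝ) + δ)
          / (((2 + n / m : ℕ) : ℝ) * (2 * m + δ))) * S m δ n C'
        + ∑ q ∈ win m s (2 + n / m) \ C'.image Prod.fst,
            ENNReal.ofReal (1 / (((2 + n / m : ℕ) : ℝ) * (2 * m + δ)))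
              * S m δ n (insert (q, s) C') := by
  set D : ℝ := ((2 + n / m : ℕ) : ℝ) * (2 * m + δ) with hD
  have hDpos : (0 : ℝ) < D := by
    apply mul_pos
    · have h2 : 0 < 2 + n / m := Nat.lt_of_lt_of_le (by norm_num) (Nat.le_add_right 2 (n / m))
      exact_mod_cast h2
    · exact twom_pos m δ hm hδ
  set f : ℕ := (if s ≤ 2 then 2 * m else m)
      + (C'.filter fun c => c.1 ∈ win m s (2 + n / m) ∧ c.2 = s).card with hf
  set Free : Finset (ℕ × ℕ) := win m s (2 + n / m) \ C'.image Prod.fst with hFree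
  have hav : ∀ c ∈ C', c.1 ≠ tpos m n := by
    intro c hc
    obtain ⟨a, ha, hca⟩ := hC' c hc
    rw [hca]
    exact tpos_ne m hm (by omega)
  rw [S_succ m δ hm]
  have key : ∀ h ∈ F m n,
      (∑ v ∈ Finset.Icc 1 (2 + n / m),
        if cOK (insert (tpos m n, s) C') (upd h (tpos m n) v) then
          W m δ n h * step m δ (upd h (tpos m n) v) (tpos m n) else 0)
      = (if cOK C' h then
          W m δ n h * ENNReal.ofReal ((((f : ℕ) : ℝ) + δ
            + ((Free.filter fun q => h q.1 q.2 = s).card : ℝ)) / D) else 0) := by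
    intro h hh
    have hc : ∀ v, cOK (insert (tpos m n, s) C') (upd h (tpos m n) v)
        ↔ v = s ∧ cOK C' h := by
      intro v
      rw [cOK_insert, cOK_upd m hm hav]
      have hred : (upd h (tpos m n) v (tpos m n, s).1.1 (tpos m n, s).1.2
          = (tpos m n, s).2) ↔ v = s := by
        show upd h (tpos m n) v (tpos m n).1 (tpos m n).2 = s ↔ v = s
        rw [upd_same]
      rw [hred]
    simp only [hc]
    rw [Finset.sum_eq_single_of_mem s hs]
    · simp only [eq_self_iff_true, true_and]
      by_cases hOK : cOK C' h
      · rw [if_pos hOK, if_pos hOK, step_upd_top m δ hs h, ← hD]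
        have hds := degree_split m hm hfun hOK (n := n) s
        rw [← hFree, ← hf] at hds
        congr 2
        rw [hds]
        push_cast
        ring
      · rw [if_neg hOK, if_neg hOK]
    · intro v _ hv
      rw [if_neg (fun hcon => hv hcon.1)]
  rw [Finset.sum_congr rfl key]
  have expand : ∀ h ∈ F m n,
      (if cOK C' h then
        W m δ n h * ENNReal.ofReal ((((f : ℕ) : ℝ) + δ
          + ((Free.filter fun q => h q.1 q.2 = s).card : ℝ)) / D) else 0)
      = (if cOK C' h then W m δ n h * ENNReal.ofReal ((((f : ℕ) : ℝ) + δ) / D) else 0)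
        + ∑ q ∈ Free, (if h q.1 q.2 = s ∧ cOK C' h then
            W m δ n h * ENNReal.ofReal (1 / D) else 0) := by
    intro h _
    by_cases hOK : cOK C' h
    · have hcnt : ∑ q ∈ Free, (if h q.1 q.2 = s then
          W m δ n h * ENNReal.ofReal (1 / D) else 0)
          = ((Free.filter fun q => h q.1 q.2 = s).card : ℝ≥0∞)
            * (W m δ n h * ENNReal.ofReal (1 / D)) := by
        rw [← Finset.sum_filter, Finset.sum_const, nsmul_eq_mul]
      have hof : ENNReal.ofReal ((((f : ℕ) : ℝ) + δ
          + ((Free.filter fun q => h q.1 q.2 = s).card : ℝ)) / D)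
          = ENNReal.ofReal ((((f : ℕ) : ℝ) + δ) / D)
            + ((Free.filter fun q => h q.1 q.2 = s).card : ℝ≥0∞)
              * ENNReal.ofReal (1 / D) := by
        have hfpos : (0 : ℝ) ≤ ((f : ℕ) : ℝ) + δ := by
          have hmf : (m : ℝ) ≤ ((f : ℕ) : ℝ) := by
            have hmf' : m ≤ f := by
              rw [hf]
              have : m ≤ (if s ≤ 2 then 2 * m else m) := by split <;> omega
              omega
            exact_mod_cast hmf'
          have h1m : (1 : ℝ) ≤ m := by exact_mod_cast hm
          linarith
        have e1 : (((f : ℕ) : ℝ) + δ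
            + ((Free.filter fun q => h q.1 q.2 = s).card : ℝ)) / D
            = (((f : ℕ) : ℝ) + δ) / D
              + ((Free.filter fun q => h q.1 q.2 = s).card : ℝ) * (1 / D) := by
          field_simp
        rw [e1, ENNReal.ofReal_add (by positivity) (by positivity),
          ENNReal.ofReal_mul (by positivity), ENNReal.ofReal_natCast]
      simp only [if_pos hOK, hOK, and_true, if_true]
      rw [hcnt, hof]
      ring
    · have hall : ∀ q : ℕ × ℕ, ¬(h q.1 q.2 = s ∧ cOK C' h) := fun q hq => hOK hq.2
      rw [if_neg hOK, if_neg hOK, Finset.sum_eq_zero (fun q _ => if_neg (hall q))]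
      simp
  rw [Finset.sum_congr rfl expand, Finset.sum_add_distrib]
  congr 1
  · unfold S
    rw [Finset.mul_sum]
    apply Finset.sum_congr rfl
    intro h _
    by_cases hOK : cOK C' h <;> simp [hOK, mul_comm]
  · rw [Finset.sum_comm]
    apply Finset.sum_congr rfl
    intro q _
    unfold S
    rw [Finset.mul_sum]
    apply Finset.sum_congr rfl
    intro h _
    simp only [cOK_insert]
    by_cases h1 : h q.1 q.2 = s <;> by_cases h2 : cOK C' h <;>
      simp [h1, h2, mul_comm]
end NC
namespace NC

variable (m : ℕ) (δ : ℝ)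

theorem main_ineq (hm : 1 ≤ m) (hδ : -(m : ℝ) < δ) :
    ∀ n : ℕ, ∀ k : ℕ, ∀ sv : Fin k → ℕ, Function.Injective sv →
    ∀ 𝒞 : Fin k → Finset ((ℕ × ℕ) × ℕ),
      (∀ i, ∀ c ∈ 𝒞 i, c.2 = sv i) →
      (∀ i, ∀ c ∈ 𝒞 i, ∃ a < n, c.1 = tpos m a) →
      S m δ n (Finset.univ.biUnion 𝒞) ≤ ∏ i, S m δ n (𝒞 i) := by
  intro n
  induction n with
  | zero =>
    intro k sv hsv 𝒞 h1 h2
    have hempty : ∀ i, 𝒞 i = ∅ := fun i => Finset.eq_empty_of_forall_notMem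
      (fun c hc => by obtain ⟨a, ha, -⟩ := h2 i c hc; omega)
    rw [show Finset.univ.biUnion 𝒞 = ∅ by ext x; simp [hempty], S_empty m δ hm hδ]
    have hone : ∀ i ∈ Finset.univ, S m δ 0 (𝒞 i) = 1 := fun i _ => by
      rw [hempty i]; exact S_empty m δ hm hδ 0
    rw [Finset.prod_congr rfl hone]
    simp
  | succ n ih =>
    intro k sv hsv 𝒞 h1 h2
    set C := Finset.univ.biUnion 𝒞 with hC
    by_cases hconf : ∃ c1 ∈ C, ∃ c2 ∈ C, c1.1 = c2.1 ∧ c1.2 ≠ c2.2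
    · obtain ⟨c1, hc1, c2, hc2, hp, ht⟩ := hconf
      rw [S_conflict m δ (n + 1) hc1 hc2 hp ht]
      exact zero_le
    push_neg at hconf
    by_cases htop : ∃ i, ∃ c ∈ 𝒞 i, c.1 = tpos m n
    case neg =>
      have hall : ∀ i, ∀ c ∈ 𝒞 i, ∃ a < n, c.1 = tpos m a := by
        intro i c hc
        obtain ⟨a, ha, hca⟩ := h2 i c hc
        rcases Nat.lt_succ_iff_lt_or_eq.mp ha with hlt | heq
        · exact ⟨a, hlt, hca⟩
        · exact absurd ⟨i, c, hc, heq ▸ hca⟩ htop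
      have hallC : ∀ c ∈ C, ∃ a < n, c.1 = tpos m a := by
        intro c hc
        rw [hC, Finset.mem_biUnion] at hc
        obtain ⟨i, -, hci⟩ := hc
        exact hall i c hci
      rw [S_stable m δ hm hδ n C hallC,
        Finset.prod_congr rfl (fun i _ => S_stable m δ hm hδ n (𝒞 i) (hall i))]
      exact ih k sv hsv 𝒞 h1 hall
    case pos =>
      obtain ⟨i₀, c₀, hc₀, hc₀p⟩ := htop
      have hc₀t : c₀.2 = sv i₀ := h1 i₀ c₀ hc₀
      set s := sv i₀ with hsdef
      have hc₀eq : c₀ = (tpos m n, s) := Prod.ext hc₀p hc₀t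
      have hother : ∀ j, j ≠ i₀ → ∀ c ∈ 𝒞 j, c.1 ≠ tpos m n := by
        intro j hj c hc hcp
        have hct : c.2 = sv j := h1 j c hc
        have hCc : c ∈ C := Finset.mem_biUnion.mpr ⟨j, Finset.mem_univ j, hc⟩
        have hCc₀ : c₀ ∈ C := Finset.mem_biUnion.mpr ⟨i₀, Finset.mem_univ i₀, hc₀⟩
        have heq2 := hconf c hCc c₀ hCc₀ (by rw [hcp, hc₀p])
        rw [hct, hc₀t] at heq2
        exact hj (hsv heq2)
      set Di := (𝒞 i₀).erase (tpos m n, s) with hDi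
      have hsplitU : ∀ E : Finset ((ℕ × ℕ) × ℕ),
          Finset.univ.biUnion (Function.update 𝒞 i₀ E)
            = E ∪ (Finset.univ.erase i₀).biUnion 𝒞 := by
        intro E
        ext x
        simp only [Finset.mem_biUnion, Finset.mem_union, Finset.mem_univ, true_and,
          Finset.mem_erase]
        constructor
        · rintro ⟨j, hj⟩
          by_cases hji : j = i₀
          · subst hji; rw [Function.update_self] at hj; exact Or.inl hj
          · rw [Function.update_of_ne hji] at hj; exact Or.inr ⟨j, ⟨hji, trivial⟩, hj⟩
        · rintro (hx | ⟨j, ⟨hji, -⟩, hj⟩)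
          · exact ⟨i₀, by rw [Function.update_self]; exact hx⟩
          · exact ⟨j, by rw [Function.update_of_ne hji]; exact hj⟩
      set R := Finset.univ.biUnion (Function.update 𝒞 i₀ Di) with hR
      have hRsplit : R = Di ∪ (Finset.univ.erase i₀).biUnion 𝒞 := hsplitU Di
      have hCU : C = 𝒞 i₀ ∪ (Finset.univ.erase i₀).biUnion 𝒞 := by
        have h0 := hsplitU (𝒞 i₀)
        rwa [Function.update_eq_self] at h0
      have hIeq : 𝒞 i₀ = insert (tpos m n, s) Di := by
        rw [hDi]
        exact (Finset.insert_erase (hc₀eq ▸ hc₀)).symm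
      have hCR : C = insert (tpos m n, s) R := by
        rw [hCU, hIeq, Finset.insert_union, ← hRsplit]
      have hRpos : ∀ c ∈ R, ∃ a < n, c.1 = tpos m a := by
        intro c hc
        rw [hRsplit, Finset.mem_union] at hc
        rcases hc with hc | hc
        · have hcmem : c ∈ 𝒞 i₀ := Finset.mem_of_mem_erase hc
          obtain ⟨a, ha, hca⟩ := h2 i₀ c hcmem
          rcases Nat.lt_succ_iff_lt_or_eq.mp ha with hlt | heq
          · exact ⟨a, hlt, hca⟩
          · exfalso
            subst heq
            exact (Finset.mem_erase.mp hc).1 (Prod.ext hca (h1 i₀ c hcmem))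
        · rw [Finset.mem_biUnion] at hc
          obtain ⟨j, hj, hcj⟩ := hc
          obtain ⟨a, ha, hca⟩ := h2 j c hcj
          rcases Nat.lt_succ_iff_lt_or_eq.mp ha with hlt | heq
          · exact ⟨a, hlt, hca⟩
          · exfalso; subst heq
            exact hother j (Finset.mem_erase.mp hj).1 c hcj hca
      have hRsub : R ⊆ C := by rw [hCR]; exact Finset.subset_insert _ _
      have hfunR : ∀ c ∈ R, ∀ c' ∈ R, c.1 = c'.1 → c.2 = c'.2 :=
        fun c hc c' hc' => hconf c (hRsub hc) c' (hRsub hc')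
      have hDiR : Di ⊆ R := by rw [hRsplit]; exact Finset.subset_union_left
      have hfunD : ∀ c ∈ Di, ∀ c' ∈ Di, c.1 = c'.1 → c.2 = c'.2 :=
        fun c hc c' hc' => hfunR c (hDiR hc) c' (hDiR hc')
      have hDpos' : ∀ c ∈ Di, ∃ a < n, c.1 = tpos m a := fun c hc => hRpos c (hDiR hc)
      by_cases hsval : s ∈ Finset.Icc 1 (2 + n / m)
      case neg =>
        have hz : S m δ (n + 1) (𝒞 i₀) = 0 := by
          apply S_invalid m δ hm (n + 1) hc₀ (show n < n + 1 by omega) hc₀p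
          rwa [hc₀t]
        rw [Finset.prod_eq_zero (Finset.mem_univ i₀) hz]
        calc S m δ (n + 1) C ≤ S m δ (n + 1) (𝒞 i₀) := by
              apply S_mono
              intro c hc
              exact Finset.mem_biUnion.mpr ⟨i₀, Finset.mem_univ i₀, hc⟩
          _ = 0 := hz
      case pos =>
        set P := ∏ j ∈ Finset.univ.erase i₀, S m δ n (𝒞 j) with hP
        have h1' : ∀ j, ∀ c ∈ Function.update 𝒞 i₀ Di j, c.2 = sv j := by
          intro j c hc
          by_cases hji : j = i₀
          · subst hji
            rw [Function.update_self] at hc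
            exact h1 _ c (Finset.mem_of_mem_erase hc)
          · rw [Function.update_of_ne hji] at hc
            exact h1 j c hc
        have h2' : ∀ j, ∀ c ∈ Function.update 𝒞 i₀ Di j, ∃ a < n, c.1 = tpos m a :=
          fun j c hc => hRpos c (Finset.mem_biUnion.mpr ⟨j, Finset.mem_univ _, hc⟩)
        have hRle : S m δ n R ≤ S m δ n Di * P := by
          have hih := ih k sv hsv _ h1' h2'
          rw [← hR] at hih
          refine le_trans hih (le_of_eq ?_)
          rw [← Finset.mul_prod_erase Finset.univ
            (fun j => S m δ n (Function.update 𝒞 i₀ Di j)) (Finset.mem_univ i₀)]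
          congr 1
          · rw [Function.update_self]
          · apply Finset.prod_congr rfl
            intro j hj
            rw [Function.update_of_ne (Finset.mem_erase.mp hj).1]
        have hQle : ∀ q ∈ win m s (2 + n / m) \ R.image Prod.fst,
            S m δ n (insert (q, s) R) ≤ S m δ n (insert (q, s) Di) * P := by
          intro q hq
          have hqw : q ∈ win m s (2 + n / m) := (Finset.mem_sdiff.mp hq).1
          have hqw' : q.1 ∈ Finset.Ioc (max s 2) (2 + n / m) ∧ q.2 ∈ Finset.range m :=
            Finset.mem_product.mp hqw
          have hq3 : 3 ≤ q.1 := by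
            have h2q1 : 2 < q.1 := lt_of_le_of_lt (le_max_right s 2) (Finset.mem_Ioc.mp hqw'.1).1
            omega
          have hqpos : ∃ a < n, q = tpos m a :=
            ⟨idx m q, idx_lt m hm hq3 (Finset.mem_Ioc.mp hqw'.1).2 (Finset.mem_range.mp hqw'.2),
              (tpos_idx m hm hq3 (Finset.mem_range.mp hqw'.2)).symm⟩
          have hbU : Finset.univ.biUnion (Function.update 𝒞 i₀ (insert (q, s) Di))
              = insert (q, s) R := by
            rw [hsplitU, Finset.insert_union, ← hRsplit]
          have h1q : ∀ j, ∀ c ∈ Function.update 𝒞 i₀ (insert (q, s) Di) j, c.2 = sv j := by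
            intro j c hc
            by_cases hji : j = i₀
            · subst hji
              rw [Function.update_self] at hc
              rcases Finset.mem_insert.mp hc with rfl | hc'
              · exact hsdef
              · exact h1 _ c (Finset.mem_of_mem_erase hc')
            · rw [Function.update_of_ne hji] at hc
              exact h1 j c hc
          have h2q : ∀ j, ∀ c ∈ Function.update 𝒞 i₀ (insert (q, s) Di) j,
              ∃ a < n, c.1 = tpos m a := by
            intro j c hc
            by_cases hji : j = i₀
            · subst hji
              rw [Function.update_self] at hc
              rcases Finset.mem_insert.mp hc with rfl | hc'
              · exact hqpos
              · exact hDpos' c hc'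
            · rw [Function.update_of_ne hji] at hc
              exact hRpos c (Finset.mem_biUnion.mpr ⟨j, Finset.mem_univ _,
                by rw [Function.update_of_ne hji]; exact hc⟩)
          have hih := ih k sv hsv _ h1q h2q
          rw [hbU] at hih
          refine le_trans hih (le_of_eq ?_)
          rw [← Finset.mul_prod_erase Finset.univ
            (fun j => S m δ n (Function.update 𝒞 i₀ (insert (q, s) Di) j))
            (Finset.mem_univ i₀)]
          congr 1
          · rw [Function.update_self]
          · apply Finset.prod_congr rfl
            intro j hj
            rw [Function.update_of_ne (Finset.mem_erase.mp hj).1]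
        have hstabj : ∀ j ∈ Finset.univ.erase i₀, S m δ (n + 1) (𝒞 j) = S m δ n (𝒞 j) := by
          intro j hj
          apply S_stable m δ hm hδ
          intro c hc
          obtain ⟨a, ha, hca⟩ := h2 j c hc
          rcases Nat.lt_succ_iff_lt_or_eq.mp ha with hlt | heq
          · exact ⟨a, hlt, hca⟩
          · exfalso; subst heq
            exact hother j (Finset.mem_erase.mp hj).1 c hc hca
        have hfilt : (R.filter fun c => c.1 ∈ win m s (2 + n / m) ∧ c.2 = s)
            = (Di.filter fun c => c.1 ∈ win m s (2 + n / m) ∧ c.2 = s) := by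
          ext c
          simp only [Finset.mem_filter]
          constructor
          · rintro ⟨hcR, hw, hcs⟩
            refine ⟨?_, hw, hcs⟩
            rw [hRsplit, Finset.mem_union] at hcR
            rcases hcR with hcR | hcR
            · exact hcR
            · exfalso
              rw [Finset.mem_biUnion] at hcR
              obtain ⟨j, hj, hcj⟩ := hcR
              have hji : j ≠ i₀ := (Finset.mem_erase.mp hj).1
              exact hji (hsv ((h1 j c hcj).symm.trans hcs))
          · rintro ⟨hcD, hw, hcs⟩
            exact ⟨hDiR hcD, hw, hcs⟩
        have hRHS : ∏ j, S m δ (n + 1) (𝒞 j) = S m δ (n + 1) (𝒞 i₀) * P := by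
          rw [← Finset.mul_prod_erase Finset.univ _ (Finset.mem_univ i₀)]
          congr 1
          exact Finset.prod_congr rfl hstabj
        rw [hRHS, hIeq, S_peel m δ hm hδ n Di hDpos' hfunD s hsval,
          hCR, S_peel m δ hm hδ n R hRpos hfunR s hsval, hfilt]
        have hFreeSub : win m s (2 + n / m) \ R.image Prod.fst
            ⊆ win m s (2 + n / m) \ Di.image Prod.fst :=
          Finset.sdiff_subset_sdiff Finset.Subset.rfl (Finset.image_subset_image hDiR)
        apply le_trans (add_le_add (mul_le_mul_right hRle _)
          (Finset.sum_le_sum (fun q hq => mul_le_mul_right (hQle q hq) _)))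
        rw [add_mul, Finset.sum_mul]
        apply add_le_add
        · exact le_of_eq (mul_assoc _ _ _).symm
        · refine le_trans (le_of_eq (Finset.sum_congr rfl
            (fun q _ => (mul_assoc _ _ _).symm))) ?_
          exact Finset.sum_le_sum_of_subset hFreeSub

end NC
namespace NC

variable (m : ℕ) (δ : ℝ)

lemma grid_iff (hm : 1 ≤ m) (T : ℕ) (hT : 2 ≤ T) (u j : ℕ) :
    (u, j) ∈ Finset.Ioc 2 T ×ˢ Finset.range m ↔ ∃ a < (T - 2) * m, tpos m a = (u, j) := by
  have hdm : (T - 2) * m / m = T - 2 := Nat.mul_div_cancel _ (by omega : 0 < m)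
  constructor
  · intro hin
    rw [Finset.mem_product, Finset.mem_Ioc, Finset.mem_range] at hin
    have h3 : 3 ≤ u := by omega
    refine ⟨idx m (u, j), ?_, tpos_idx m hm h3 hin.2⟩
    apply idx_lt m hm h3 _ hin.2
    rw [hdm]
    omega
  · rintro ⟨a, ha, heq⟩
    rw [← heq, Finset.mem_product, Finset.mem_Ioc, Finset.mem_range, tpos_fst, tpos_snd]
    have hdiv : a / m < T - 2 := by
      rw [Nat.div_lt_iff_lt_mul (show 0 < m by omega)]
      omega
    refine ⟨⟨?_, ?_⟩, Nat.mod_lt a (by omega)⟩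
    · generalize a / m = x
      omega
    · generalize a / m = x at hdiv ⊢
      omega

lemma W_eq_prod (T : ℕ) (h : ℕ → ℕ → ℕ) (hm : 1 ≤ m) (hT : 2 ≤ T) :
    (∏ u ∈ Finset.Ioc 2 T, ∏ j ∈ Finset.range m,
      (if h u j ∈ Finset.Icc 1 (u - 1) then
        ENNReal.ofReal (((PA.degree m h (h u j) (u - 1) : ℝ) + δ) /
          (((u : ℝ) - 1) * (2 * m + δ)))
      else 0))
    = W m δ ((T - 2) * m) h := by
  have h1 : (∏ u ∈ Finset.Ioc 2 T, ∏ j ∈ Finset.range m,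
      (if h u j ∈ Finset.Icc 1 (u - 1) then
        ENNReal.ofReal (((PA.degree m h (h u j) (u - 1) : ℝ) + δ) /
          (((u : ℝ) - 1) * (2 * m + δ)))
      else 0))
      = ∏ p ∈ Finset.Ioc 2 T ×ˢ Finset.range m, step m δ h p := by
    rw [Finset.prod_product]
    apply Finset.prod_congr rfl
    intro u _
    apply Finset.prod_congr rfl
    intro j _
    rfl
  rw [h1]
  unfold W
  apply Finset.prod_nbij' (fun p => idx m p) (fun a => tpos m a)
  · intro p hp
    rw [Finset.mem_product, Finset.mem_Ioc, Finset.mem_range] at hp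
    have h3 : 3 ≤ p.1 := by omega
    rw [Finset.mem_range]
    apply idx_lt m hm h3 _ hp.2
    rw [Nat.mul_div_cancel _ (show 0 < m by omega)]
    omega
  · intro a ha
    rw [Finset.mem_range] at ha
    have hmm := (grid_iff m hm T hT (tpos m a).1 (tpos m a).2).mpr ⟨a, ha, rfl⟩
    rwa [pair_eta] at hmm
  · intro p hp
    rw [Finset.mem_product, Finset.mem_Ioc, Finset.mem_range] at hp
    exact tpos_idx m hm (by omega) hp.2
  · intro a _
    exact idx_tpos m hm a
  · intro p hp
    rw [Finset.mem_product, Finset.mem_Ioc, Finset.mem_range] at hp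
    rw [tpos_idx m hm (by omega) hp.2]

/-- the grid of pair positions up to time `T` -/
def gridT (T : ℕ) : Finset (ℕ × ℕ) := Finset.Ioc 2 T ×ˢ Finset.range m

/-- extension of a grid assignment by zero -/
noncomputable def emb (T : ℕ) (η : (↥(gridT m T)) → ℕ) : ℕ → ℕ → ℕ :=
  fun u j => if hp : (u, j) ∈ gridT m T then η ⟨(u, j), hp⟩ else 0

/-- restriction of an assignment to the grid -/
def restrictg (T : ℕ) (h : ℕ → ℕ → ℕ) : (↥(gridT m T)) → ℕ := fun p => h p.1.1 p.1.2

lemma emb_mem (T : ℕ) (η : (↥(gridT m T)) → ℕ) (u j : ℕ) (hp : (u, j) ∈ gridT m T) :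
    emb m T η u j = η ⟨(u, j), hp⟩ := dif_pos hp

lemma emb_not (T : ℕ) (η : (↥(gridT m T)) → ℕ) (u j : ℕ) (hp : (u, j) ∉ gridT m T) :
    emb m T η u j = 0 := dif_neg hp

lemma mu_eq_S (hm : 1 ≤ m) (μ : MeasureTheory.Measure (ℕ → ℕ → ℕ))
    (hμ : PA.IsPAc m δ μ) (T : ℕ) (hT : 2 ≤ T) (C : Finset ((ℕ × ℕ) × ℕ))
    (hC : ∀ c ∈ C, c.1.1 ∈ Finset.Ioc 2 T ∧ c.1.2 ∈ Finset.range m) :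
    μ {g | cOK C g} = S m δ ((T - 2) * m) C := by
  classical
  obtain ⟨hprob, hfdd⟩ := hμ
  have hCgrid : ∀ c ∈ C, c.1 ∈ gridT m T := by
    intro c hc
    rw [gridT, Finset.mem_product]
    exact hC c hc
  set Part : ((↥(gridT m T)) → ℕ) → Set (ℕ → ℕ → ℕ) := fun η =>
    {g | ∀ u ∈ Finset.Ioc 2 T, ∀ j ∈ Finset.range m, g u j = emb m T η u j} with hPart
  have hmeasP : ∀ η, MeasurableSet (Part η) := by
    intro η
    have he : Part η = ⋂ (u ∈ Finset.Ioc 2 T) (j ∈ Finset.range m),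
        {g : ℕ → ℕ → ℕ | g u j = emb m T η u j} := by
      ext g
      simp only [hPart, Set.mem_iInter, Set.mem_setOf_eq]
    rw [he]
    apply MeasurableSet.biInter (Finset.countable_toSet _)
    intro u _
    apply MeasurableSet.biInter (Finset.countable_toSet _)
    intro j _
    have hmeas : Measurable fun g : ℕ → ℕ → ℕ => g u j :=
      (measurable_pi_apply j).comp (measurable_pi_apply u)
    exact hmeas (measurableSet_singleton (emb m T η u j))
  have hmeasC : MeasurableSet {g : ℕ → ℕ → ℕ | cOK C g} := by
    have he : {g : ℕ → ℕ → ℕ | cOK C g}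
        = ⋂ (c ∈ (C : Set ((ℕ × ℕ) × ℕ))), {g : ℕ → ℕ → ℕ | g c.1.1 c.1.2 = c.2} := by
      ext g
      simp only [Set.mem_iInter, Set.mem_setOf_eq, Finset.mem_coe]
      exact Iff.rfl
    rw [he]
    apply MeasurableSet.biInter (Finset.countable_toSet _)
    intro c _
    have hmeas : Measurable fun g : ℕ → ℕ → ℕ => g c.1.1 c.1.2 :=
      (measurable_pi_apply c.1.2).comp (measurable_pi_apply c.1.1)
    exact hmeas (measurableSet_singleton c.2)
  have hcover : ⋃ η, Part η = Set.univ := by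
    apply Set.eq_univ_of_forall
    intro g
    apply Set.mem_iUnion.mpr
    refine ⟨restrictg m T g, ?_⟩
    intro u hu j hj
    rw [emb_mem m T _ u j (by rw [gridT, Finset.mem_product]; exact ⟨hu, hj⟩)]
    rfl
  have hdisj : Pairwise (Function.onFun Disjoint Part) := by
    intro η1 η2 hne
    rw [Function.onFun, Set.disjoint_left]
    intro g hg1 hg2
    apply hne
    funext p
    obtain ⟨⟨u, j⟩, hp⟩ := p
    have hu : u ∈ Finset.Ioc 2 T := (Finset.mem_product.mp hp).1
    have hj : j ∈ Finset.range m := (Finset.mem_product.mp hp).2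
    have e1 := hg1 u hu j hj
    have e2 := hg2 u hu j hj
    rw [emb_mem m T η1 u j hp] at e1
    rw [emb_mem m T η2 u j hp] at e2
    rw [← e1, ← e2]
  have hdecomp : μ {g | cOK C g} = ∑' η, μ ({g | cOK C g} ∩ Part η) := by
    have he : {g : ℕ → ℕ → ℕ | cOK C g} = ⋃ η, ({g | cOK C g} ∩ Part η) := by
      rw [← Set.inter_iUnion, hcover, Set.inter_univ]
    have hmi := MeasureTheory.measure_iUnion (μ := μ)
      (f := fun η => {g | cOK C g} ∩ Part η)
      (fun η1 η2 hne => Set.disjoint_of_subset Set.inter_subset_right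
        Set.inter_subset_right (hdisj hne))
      (fun η => hmeasC.inter (hmeasP η))
    rw [← he] at hmi
    exact hmi
  have hkey : ∀ η, ({g | cOK C g} ∩ Part η)
      = if cOK C (emb m T η) then Part η else ∅ := by
    intro η
    split_ifs with hOK
    · apply Set.eq_of_subset_of_subset Set.inter_subset_right
      intro g hgP
      refine ⟨?_, hgP⟩
      intro c hc
      have hcg := hC c hc
      rw [hgP c.1.1 hcg.1 c.1.2 hcg.2]
      exact hOK c hc
    · apply Set.eq_empty_of_forall_notMem
      rintro g ⟨hgC, hgP⟩
      apply hOK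
      intro c hc
      have hcg := hC c hc
      rw [← hgP c.1.1 hcg.1 c.1.2 hcg.2]
      exact hgC c hc
  have hmuP : ∀ η, μ (Part η) = W m δ ((T - 2) * m) (emb m T η) := by
    intro η
    have hfdd' := hfdd T hT (emb m T η)
    rw [hPart]
    rw [hfdd']
    exact W_eq_prod m δ T (emb m T η) hm hT
  have hterm : ∀ η, μ ({g | cOK C g} ∩ Part η)
      = if cOK C (emb m T η) then W m δ ((T - 2) * m) (emb m T η) else 0 := by
    intro η
    rw [hkey η]
    split_ifs with hOK
    · exact hmuP η
    · exact MeasureTheory.measure_empty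
  rw [hdecomp, tsum_congr hterm]
  have hembres : ∀ h ∈ F m ((T - 2) * m), emb m T (restrictg m T h) = h := by
    intro h hh
    funext u j
    by_cases hin : (u, j) ∈ gridT m T
    · rw [emb_mem m T _ u j hin]
      rfl
    · rw [emb_not m T _ u j hin, F_zero m hm hh]
      intro a ha hcon
      exact hin ((grid_iff m hm T hT u j).mpr ⟨a, ha, hcon⟩)
  have hsupp : ∀ η ∉ (F m ((T - 2) * m)).image (restrictg m T),
      (if cOK C (emb m T η) then W m δ ((T - 2) * m) (emb m T η) else 0) = 0 := by
    intro η hη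
    by_contra hne0
    have hOK : cOK C (emb m T η) := by
      by_contra hbad
      rw [if_neg hbad] at hne0
      exact hne0 rfl
    rw [if_pos hOK] at hne0
    have hmemF : emb m T η ∈ F m ((T - 2) * m) := by
      rw [mem_F_iff m hm]
      constructor
      · intro a ha
        by_contra hbad
        apply hne0
        unfold W
        apply Finset.prod_eq_zero (Finset.mem_range.mpr ha)
        unfold step
        rw [tpos_fst_sub]
        rw [if_neg hbad]
      · intro u j hav
        apply emb_not
        intro hin
        obtain ⟨a, haN, hpa⟩ := (grid_iff m hm T hT u j).mp hin
        exact hav a haN hpa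
    apply hη
    apply Finset.mem_image.mpr
    refine ⟨emb m T η, hmemF, ?_⟩
    funext p
    obtain ⟨⟨u, j⟩, hp⟩ := p
    show emb m T η u j = η ⟨(u, j), hp⟩
    exact emb_mem m T η u j hp
  rw [tsum_eq_sum hsupp]
  rw [Finset.sum_image ?hinj]
  case hinj =>
    intro h1 hh1 h2 hh2 hre
    funext u j
    by_cases hin : (u, j) ∈ gridT m T
    · exact congrFun hre ⟨(u, j), hin⟩
    · rw [F_zero m hm hh1, F_zero m hm hh2] <;>
      · intro a ha hcon
        exact hin ((grid_iff m hm T hT u j).mpr ⟨a, ha, hcon⟩)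
  unfold S
  apply Finset.sum_congr rfl
  intro h hh
  rw [hembres h hh]

end NC

/-- **Negative correlation of attachment events.**
In the model (c) preferential attachment process, fix k ≥ 1 distinct vertices
s₁,…,s_k, and for each s among them let E_s = ⋂_{i=1}^{n_s} {g(t_i,j_i) = s} be an
intersection of attachment events with target s (arbitrary times t_i ≥ 3 and edge
indices j_i < m). Then P(⋂ E_{s_i}) ≤ ∏ P(E_{s_i}). -/
theorem negative_correlation (m : ℕ) (hm : 1 ≤ m) (δ : ℝ) (hδ : -(m : ℝ) < δ)
    (μ : MeasureTheory.Measure (ℕ → ℕ → ℕ)) (hμ : PA.IsPAc m δ μ)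
    (k : ℕ) (hk : 1 ≤ k) (s : Fin k → ℕ) (hs : Function.Injective s)
    (n : Fin k → ℕ) (hn : ∀ i, 1 ≤ n i)
    (T : (i : Fin k) → Fin (n i) → ℕ) (J : (i : Fin k) → Fin (n i) → ℕ)
    (hT : ∀ i a, 3 ≤ T i a) (hJ : ∀ i a, J i a < m) :
    μ (⋂ i : Fin k, {g | ∀ a : Fin (n i), g (T i a) (J i a) = s i}) ≤
      ∏ i : Fin k, μ {g | ∀ a : Fin (n i), g (T i a) (J i a) = s i} := by
  classical
  set Tm := Finset.univ.sup (fun i : Fin k => Finset.univ.sup (T i)) with hTm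
  have hTmax : ∀ i a, T i a ≤ Tm := by
    intro i a
    rw [hTm]
    exact le_trans (Finset.le_sup (Finset.mem_univ a))
      (Finset.le_sup (f := fun i => Finset.univ.sup (T i)) (Finset.mem_univ i))
  have hT2 : 2 ≤ Tm := by
    have hk0 : 0 < k := hk
    have i0 : Fin k := ⟨0, hk0⟩
    have a0 : Fin (n i0) := ⟨0, hn i0⟩
    have := hT i0 a0
    have := hTmax i0 a0
    omega
  set N := (Tm - 2) * m with hN
  have hNdm : N / m = Tm - 2 := by rw [hN]; exact Nat.mul_div_cancel _ (by omega : 0 < m)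
  set Ci : Fin k → Finset ((ℕ × ℕ) × ℕ) := fun i =>
    Finset.univ.image (fun a : Fin (n i) => ((T i a, J i a), s i)) with hCi
  have hEvent : ∀ i, {g : ℕ → ℕ → ℕ | ∀ a : Fin (n i), g (T i a) (J i a) = s i}
      = {g | NC.cOK (Ci i) g} := by
    intro i
    ext g
    simp only [Set.mem_setOf_eq, NC.cOK, hCi, Finset.mem_image, Finset.mem_univ, true_and]
    constructor
    · rintro hg c ⟨a, rfl⟩
      exact hg a
    · intro hg a
      exact hg _ ⟨a, rfl⟩
  have hposC : ∀ i, ∀ c ∈ Ci i, c.1.1 ∈ Finset.Ioc 2 Tm ∧ c.1.2 ∈ Finset.range m := by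
    intro i c hc
    rw [hCi] at hc
    simp only [Finset.mem_image, Finset.mem_univ, true_and] at hc
    obtain ⟨a, rfl⟩ := hc
    have h3 := hT i a
    constructor
    · show T i a ∈ Finset.Ioc 2 Tm
      rw [Finset.mem_Ioc]
      exact ⟨by omega, hTmax i a⟩
    · show J i a ∈ Finset.range m
      exact Finset.mem_range.mpr (hJ i a)
  have hInter : (⋂ i, {g : ℕ → ℕ → ℕ | ∀ a : Fin (n i), g (T i a) (J i a) = s i})
      = {g | NC.cOK (Finset.univ.biUnion Ci) g} := by
    ext g
    simp only [Set.mem_iInter]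
    constructor
    · intro hg c hc
      rw [Finset.mem_biUnion] at hc
      obtain ⟨i, -, hci⟩ := hc
      have := (hEvent i) ▸ (hg i)
      exact this c hci
    · intro hg i
      rw [hEvent i]
      intro c hc
      exact hg c (Finset.mem_biUnion.mpr ⟨i, Finset.mem_univ i, hc⟩)
  have h1C : ∀ i, ∀ c ∈ Ci i, c.2 = s i := by
    intro i c hc
    rw [hCi] at hc
    simp only [Finset.mem_image, Finset.mem_univ, true_and] at hc
    obtain ⟨a, rfl⟩ := hc
    rfl
  have h2C : ∀ i, ∀ c ∈ Ci i, ∃ a < N, c.1 = NC.tpos m a := by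
    intro i c hc
    have hp := hposC i c hc
    rw [Finset.mem_Ioc] at hp
    have h3 : 3 ≤ c.1.1 := by omega
    have hjm : c.1.2 < m := Finset.mem_range.mp hp.2
    refine ⟨NC.idx m c.1, ?_, (NC.tpos_idx m hm h3 hjm).symm⟩
    apply NC.idx_lt m hm h3 _ hjm
    rw [hNdm]
    omega
  have hbiUC : ∀ c ∈ Finset.univ.biUnion Ci,
      c.1.1 ∈ Finset.Ioc 2 Tm ∧ c.1.2 ∈ Finset.range m := by
    intro c hc
    rw [Finset.mem_biUnion] at hc
    obtain ⟨i, -, hci⟩ := hc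
    exact hposC i c hci
  rw [hInter, NC.mu_eq_S m δ hm μ hμ Tm hT2 _ hbiUC]
  rw [Finset.prod_congr rfl (fun i _ => by
    rw [hEvent i, NC.mu_eq_S m δ hm μ hμ Tm hT2 _ (hposC i)])]
  exact NC.main_ineq m δ hm hδ N k s hs Ci h1C h2C
end

section
/- Fix a ∈ (0, 1/2). For every b > a with a + b < 1, setting C_{a,b} = 1/(b−a) + 2/(1−a−b), one has for every pair of integers 1 ≤ i < t and every k ≥ 1 that f_k(i,t) ≤ C_{a,b}^k / (i^b t^{1−b}). -/
open scoped ENNReal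
open Real Finset

lemma bern1 {d x : ℝ} (hd0 : 0 ≤ d) (hd1 : d ≤ 1) (hx : 1 ≤ x) :
    (x - 1) ^ d ≤ x ^ d - d * x ^ (d - 1) := by
  have hx0 : (0:ℝ) < x := lt_of_lt_of_le one_pos hx
  have h1 : x - 1 = x * (1 + (-1/x)) := by field_simp; ring
  have h2 : (1 + (-1/x)) ^ d ≤ 1 + d * (-1/x) := by
    apply rpow_one_add_le_one_add_mul_self _ hd0 hd1
    rw [neg_div]
    simp only [neg_le_neg_iff]
    rw [div_le_one hx0]; linarith
  calc (x - 1) ^ d = x ^ d * (1 + (-1/x)) ^ d := by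
        rw [h1, Real.mul_rpow hx0.le]
        rw [neg_div, ← sub_eq_add_neg, sub_nonneg, div_le_one hx0]; linarith
    _ ≤ x ^ d * (1 + d * (-1/x)) := by
        apply mul_le_mul_of_nonneg_left h2 (rpow_nonneg hx0.le d)
    _ = x ^ d - d * (x ^ d / x) := by ring
    _ = x ^ d - d * x ^ (d - 1) := by
        rw [← Real.rpow_sub_one hx0.ne' d]

lemma bern2 {e x : ℝ} (he0 : 0 < e) (he1 : e ≤ 1) (hx : 2 ≤ x) :
    e * x ^ (-(1+e)) ≤ (x - 1) ^ (-e) - x ^ (-e) := by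
  have hx0 : (0:ℝ) < x := by linarith
  have hx1 : (0:ℝ) < x - 1 := by linarith
  have hex : e / x < 1 := by rw [div_lt_one hx0]; linarith
  have hex0 : 0 < 1 - e / x := by linarith
  have h2 : (x - 1) ^ e ≤ x ^ e * (1 - e/x) := by
    have h1 : x - 1 = x * (1 + (-1/x)) := by field_simp; ring
    have hb : (1 + (-1/x)) ^ e ≤ 1 + e * (-1/x) := by
      apply rpow_one_add_le_one_add_mul_self _ he0.le he1
      rw [neg_div]; simp only [neg_le_neg_iff]; rw [div_le_one hx0]; linarith
    calc (x-1)^e = x^e * (1 + (-1/x))^e := by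
          rw [h1, Real.mul_rpow hx0.le]
          rw [neg_div, ← sub_eq_add_neg, sub_nonneg, div_le_one hx0]; linarith
      _ ≤ x^e * (1 + e * (-1/x)) := mul_le_mul_of_nonneg_left hb (rpow_nonneg hx0.le e)
      _ = x^e * (1 - e/x) := by ring
  have hxe : (0:ℝ) < x ^ e := rpow_pos_of_pos hx0 e
  have hx1e : (0:ℝ) < (x-1) ^ e := rpow_pos_of_pos hx1 e
  have h3 : (x^e * (1 - e/x))⁻¹ ≤ (x - 1)^(-e) := by
    rw [Real.rpow_neg hx1.le]
    exact inv_anti₀ (by positivity) h2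
  have h4 : x^(-e) + e * x^(-(1+e)) ≤ (x^e * (1 - e/x))⁻¹ := by
    have hkey : x^(-e) + e * x^(-(1+e)) = x^(-e) * (1 + e/x) := by
      rw [Real.rpow_neg hx0.le, neg_add, Real.rpow_add hx0 (-1) (-e),
        Real.rpow_neg hx0.le 1, Real.rpow_one, Real.rpow_neg hx0.le e]
      field_simp
    rw [hkey, mul_inv, ← Real.rpow_neg hx0.le]
    apply mul_le_mul_of_nonneg_left _ (rpow_nonneg hx0.le (-e))
    have hinv : (1 - e/x) * (1 - e/x)⁻¹ = 1 := mul_inv_cancel₀ hex0.ne'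
    nlinarith [sq_nonneg (e/x), inv_pos.mpr hex0]
  linarith

lemma T1 {c : ℝ} (hc0 : 0 < c) (hc1 : c < 1) (n : ℕ) :
    ∑ s ∈ Finset.range (n+1), ((s:ℝ)) ^ (-c) ≤ (n:ℝ) ^ (1-c) / (1-c) := by
  have hd0 : (0:ℝ) < 1 - c := by linarith
  rw [Finset.sum_range_succ']
  have h0 : ((0:ℕ):ℝ) ^ (-c) = 0 := by
    simp [Real.zero_rpow (by linarith : -c ≠ 0)]
  rw [h0, add_zero]
  have hterm : ∀ j ∈ Finset.range n, (((j+1:ℕ)):ℝ) ^ (-c) ≤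
      (((j+1:ℕ)):ℝ) ^ (1-c) / (1-c) - ((j:ℕ):ℝ) ^ (1-c) / (1-c) := by
    intro j _
    have hx : (1:ℝ) ≤ ((j+1:ℕ):ℝ) := by exact_mod_cast Nat.one_le_iff_ne_zero.mpr (Nat.succ_ne_zero j)
    have hb := bern1 (d := 1 - c) (x := ((j+1:ℕ):ℝ)) hd0.le (by linarith) hx
    have hsub : ((j+1:ℕ):ℝ) - 1 = ((j:ℕ):ℝ) := by push_cast; ring
    rw [hsub] at hb
    have hexp : (1 - c) - 1 = -c := by ring
    rw [hexp] at hb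
    rw [div_sub_div_same, le_div_iff₀ hd0]
    nlinarith
  calc ∑ j ∈ Finset.range n, (((j+1:ℕ)):ℝ) ^ (-c)
      ≤ ∑ j ∈ Finset.range n, ((((j+1:ℕ)):ℝ) ^ (1-c) / (1-c) - ((j:ℕ):ℝ) ^ (1-c) / (1-c)) :=
        Finset.sum_le_sum hterm
    _ = ((n:ℕ):ℝ) ^ (1-c) / (1-c) - ((0:ℕ):ℝ) ^ (1-c) / (1-c) :=
        Finset.sum_range_sub (fun m => ((m:ℕ):ℝ) ^ (1-c) / (1-c)) n
    _ ≤ (n:ℝ) ^ (1-c) / (1-c) := by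
        simp [Real.zero_rpow (by linarith : (1:ℝ) - c ≠ 0)]

lemma T2 {e : ℝ} (he0 : 0 < e) (he1 : e ≤ 1) {i : ℕ} (hi : 1 ≤ i) (N : ℕ) :
    ∑ s ∈ Finset.Ico (i+1) N, ((s:ℝ)) ^ (-(1+e)) ≤ (i:ℝ) ^ (-e) / e := by
  rw [Finset.sum_Ico_eq_sum_range]
  have hterm : ∀ j ∈ Finset.range (N - (i+1)), (((i+1+j:ℕ)):ℝ) ^ (-(1+e)) ≤
      ((i+j:ℕ):ℝ) ^ (-e) / e - ((i+(j+1):ℕ):ℝ) ^ (-e) / e := by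
    intro j _
    have hx : (2:ℝ) ≤ ((i+1+j:ℕ):ℝ) := by
      have : 2 ≤ i + 1 + j := by omega
      exact_mod_cast this
    have hb := bern2 (e := e) (x := ((i+1+j:ℕ):ℝ)) he0 he1 hx
    have hsub : ((i+1+j:ℕ):ℝ) - 1 = ((i+j:ℕ):ℝ) := by push_cast; ring
    have hsub2 : ((i+(j+1):ℕ):ℝ) = ((i+1+j:ℕ):ℝ) := by push_cast; ring
    rw [hsub] at hb
    rw [hsub2, div_sub_div_same, le_div_iff₀ he0]
    nlinarith
  calc ∑ j ∈ Finset.range (N-(i+1)), (((i+1+j:ℕ)):ℝ) ^ (-(1+e))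
      ≤ ∑ j ∈ Finset.range (N-(i+1)), (((i+j:ℕ):ℝ) ^ (-e) / e - ((i+(j+1):ℕ):ℝ) ^ (-e) / e) :=
        Finset.sum_le_sum hterm
    _ = ((i+0:ℕ):ℝ) ^ (-e) / e - ((i + (N-(i+1)):ℕ):ℝ) ^ (-e) / e :=
        Finset.sum_range_sub' (fun m => ((i+m:ℕ):ℝ) ^ (-e) / e) (N-(i+1))
    _ ≤ (i:ℝ) ^ (-e) / e := by
        have : (0:ℝ) ≤ ((i + (N-(i+1)):ℕ):ℝ) ^ (-e) / e := by positivity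
        simp only [Nat.add_zero]
        linarith

noncomputable def wt (a : ℝ) (m n : ℕ) : ℝ :=
  1 / (((min m n : ℕ) : ℝ) ^ a * ((max m n : ℕ) : ℝ) ^ (1 - a))

noncomputable def Cab (a b : ℝ) : ℝ := 1 / (b - a) + 2 / (1 - a - b)

lemma wt_nonneg (a : ℝ) (m n : ℕ) : 0 ≤ wt a m n := by
  unfold wt; positivity

lemma term_nonneg {b : ℝ} (a : ℝ) (i s : ℕ) : 0 ≤ wt a i s * (s:ℝ) ^ (-b) := by
  have := wt_nonneg a i s
  positivity

noncomputable def pw (a : ℝ) (m n : ℕ) : ℝ≥0∞ := ENNReal.ofReal (wt a m n)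

noncomputable def FF (a : ℝ) (i t k : ℕ) (s : Fin (k+1) → ℕ) : ℝ≥0∞ :=
  if s 0 = i ∧ s (Fin.last k) = t then ∏ j : Fin k, pw a (s j.castSucc) (s j.succ) else 0

noncomputable def BB (b : ℝ) (m n : ℕ) : ℝ≥0∞ :=
  ENNReal.ofReal ((m:ℝ) ^ (-b)) * ENNReal.ofReal ((n:ℝ) ^ (b-1))

lemma pw_zero_right {a : ℝ} (ha0 : 0 < a) (m : ℕ) : pw a m 0 = 0 := by
  rw [pw, wt, _root_.min_zero, max_eq_left (Nat.zero_le m), Nat.cast_zero,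
    Real.zero_rpow (ne_of_gt ha0), zero_mul, div_zero, ENNReal.ofReal_zero]

-- the key splitting of FF over Fin.cons

lemma FF_cons (a : ℝ) (i t k : ℕ) (x : ℕ) (f : Fin (k+1) → ℕ) :
    FF a i t (k+1) (Fin.cons x f) =
      if x = i then pw a x (f 0) * FF a (f 0) t k f else 0 := by
  have hlast : (Fin.cons x f : Fin (k+2) → ℕ) (Fin.last (k+1)) = f (Fin.last k) := by
    rw [← Fin.succ_last, Fin.cons_succ]
  have hzero : (Fin.cons x f : Fin (k+2) → ℕ) 0 = x := Fin.cons_zero _ _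
  have hprod : ∏ j : Fin (k+1), pw a ((Fin.cons x f : Fin (k+2) → ℕ) j.castSucc)
      ((Fin.cons x f : Fin (k+2) → ℕ) j.succ) =
      pw a x (f 0) * ∏ j : Fin k, pw a (f j.castSucc) (f j.succ) := by
    rw [Fin.prod_univ_succ]
    congr 1
  by_cases hx : x = i
  · by_cases hq : f (Fin.last k) = t
    · rw [FF, if_pos ⟨by rw [hzero, hx], by rw [hlast, hq]⟩, if_pos hx, FF,
        if_pos ⟨rfl, hq⟩, hprod]
    · rw [FF, if_neg (by rw [hlast]; tauto), if_pos hx, FF, if_neg (by tauto), mul_zero]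
  · rw [FF, if_neg (by rw [hzero]; tauto), if_neg hx]

section main
variable {a b : ℝ} (ha0 : 0 < a) (hab : a < b) (hab1 : a + b < 1)

include ha0 hab hab1 in
lemma hC1 : 1 ≤ Cab a b := by
  have h1 : 0 < b - a := by linarith
  have h2 : b - a < 1 := by linarith
  have h3 : 0 < 1 - a - b := by linarith
  have : 1 ≤ 1 / (b - a) := by rw [le_div_iff₀ h1]; linarith
  have : 0 < 2 / (1 - a - b) := by positivity
  unfold Cab; linarith

-- L1: head bound

include ha0 hab hab1 in
lemma L1 {m n : ℕ} (hm : 1 ≤ m) (hn : 1 ≤ n) :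
    wt a m n ≤ Cab a b * (1 / ((m:ℝ) ^ b * (n:ℝ) ^ (1 - b))) := by
  have hm0 : (0:ℝ) < m := by exact_mod_cast hm
  have hn0 : (0:ℝ) < n := by exact_mod_cast hn
  have hC := hC1 ha0 hab hab1
  have hba : (0:ℝ) ≤ b - a := by linarith
  rcases le_total m n with h | h
  · have hmin : min m n = m := min_eq_left h
    have hmax : max m n = n := max_eq_right h
    rw [wt, hmin, hmax, mul_one_div, div_le_div_iff₀ (by positivity) (by positivity), one_mul,
      mul_comm (Cab a b) _]
    -- goal : m^b * n^(1-b) ≤ m^a * n^(1-a) * Cab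
    have key : (m:ℝ) ^ b * (n:ℝ) ^ (1-b) ≤ (m:ℝ) ^ a * (n:ℝ) ^ (1-a) := by
      have e1 : (m:ℝ) ^ b = (m:ℝ) ^ a * (m:ℝ) ^ (b - a) := by
        rw [← Real.rpow_add hm0]; ring_nf
      have e2 : (n:ℝ) ^ (1-a) = (n:ℝ) ^ (1-b) * (n:ℝ) ^ (b - a) := by
        rw [← Real.rpow_add hn0]; ring_nf
      have hle : (m:ℝ) ^ (b-a) ≤ (n:ℝ) ^ (b-a) :=
        Real.rpow_le_rpow hm0.le (by exact_mod_cast h) hba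
      rw [e1, e2]
      have h1 : (0:ℝ) ≤ (m:ℝ)^a := (Real.rpow_pos_of_pos hm0 a).le
      have h2 : (0:ℝ) ≤ (n:ℝ)^(1-b) := (Real.rpow_pos_of_pos hn0 _).le
      calc (m:ℝ)^a * (m:ℝ)^(b-a) * (n:ℝ)^(1-b) ≤ (m:ℝ)^a * (n:ℝ)^(b-a) * (n:ℝ)^(1-b) := by
            apply mul_le_mul_of_nonneg_right (mul_le_mul_of_nonneg_left hle h1) h2
        _ = (m:ℝ)^a * ((n:ℝ)^(1-b) * (n:ℝ)^(b-a)) := by ring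
      -- done
    calc (m:ℝ) ^ b * (n:ℝ) ^ (1-b) ≤ (m:ℝ) ^ a * (n:ℝ) ^ (1-a) := key
      _ = (m:ℝ) ^ a * (n:ℝ) ^ (1-a) * 1 := (mul_one _).symm
      _ ≤ (m:ℝ) ^ a * (n:ℝ) ^ (1-a) * Cab a b :=
          mul_le_mul_of_nonneg_left hC (by positivity)
  · have hmin : min m n = n := min_eq_right h
    have hmax : max m n = m := max_eq_left h
    rw [wt, hmin, hmax, mul_one_div, div_le_div_iff₀ (by positivity) (by positivity), one_mul,
      mul_comm (Cab a b) _]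
    -- goal : m^b * n^(1-b) ≤ n^a * m^(1-a) * Cab
    have key : (m:ℝ) ^ b * (n:ℝ) ^ (1-b) ≤ (n:ℝ) ^ a * (m:ℝ) ^ (1-a) := by
      have e1 : (m:ℝ) ^ b = (m:ℝ) ^ (1-a) * (m:ℝ) ^ (a + b - 1) := by
        rw [← Real.rpow_add hm0]; ring_nf
      have e2 : (n:ℝ) ^ a = (n:ℝ) ^ (1-b) * (n:ℝ) ^ (a + b - 1) := by
        rw [← Real.rpow_add hn0]; ring_nf
      have hle : (m:ℝ) ^ (a+b-1) ≤ (n:ℝ) ^ (a+b-1) :=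
        Real.rpow_le_rpow_of_nonpos hn0 (by exact_mod_cast h) (by linarith)
      rw [e1, e2]
      have h1 : (0:ℝ) ≤ (m:ℝ)^(1-a) := (Real.rpow_pos_of_pos hm0 _).le
      have h2 : (0:ℝ) ≤ (n:ℝ)^(1-b) := (Real.rpow_pos_of_pos hn0 _).le
      calc (m:ℝ)^(1-a) * (m:ℝ)^(a+b-1) * (n:ℝ)^(1-b)
          ≤ (m:ℝ)^(1-a) * (n:ℝ)^(a+b-1) * (n:ℝ)^(1-b) := by
            apply mul_le_mul_of_nonneg_right (mul_le_mul_of_nonneg_left hle h1) h2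
        _ = (n:ℝ)^(1-b) * (n:ℝ)^(a+b-1) * (m:ℝ)^(1-a) := by ring
    calc (m:ℝ) ^ b * (n:ℝ) ^ (1-b) ≤ (n:ℝ) ^ a * (m:ℝ) ^ (1-a) := key
      _ = (n:ℝ) ^ a * (m:ℝ) ^ (1-a) * 1 := (mul_one _).symm
      _ ≤ (n:ℝ) ^ a * (m:ℝ) ^ (1-a) * Cab a b :=
          mul_le_mul_of_nonneg_left hC (by positivity)

include ha0 hab hab1 in
lemma L2 {i : ℕ} (hi : 1 ≤ i) (N : ℕ) :
    ∑ s ∈ Finset.range N, wt a i s * (s:ℝ) ^ (-b) ≤ Cab a b * (i:ℝ) ^ (-b) := by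
  have hi0 : (0:ℝ) < i := by exact_mod_cast hi
  have hba : (0:ℝ) < b - a := by linarith
  have hba1 : b - a ≤ 1 := by linarith
  have hc0 : (0:ℝ) < a + b := by linarith
  have h1ab : (0:ℝ) < 1 - a - b := by linarith
  set M := max N (i+1) with hM
  have hNM : N ≤ M := le_max_left _ _
  have hiM : i + 1 ≤ M := le_max_right _ _
  have hsub : ∑ s ∈ Finset.range N, wt a i s * (s:ℝ) ^ (-b) ≤
      ∑ s ∈ Finset.range M, wt a i s * (s:ℝ) ^ (-b) := by
    apply Finset.sum_le_sum_of_subset_of_nonneg (Finset.range_subset_range.mpr hNM)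
    intro s _ _; exact term_nonneg a i s
  have hsplit : ∑ s ∈ Finset.range M, wt a i s * (s:ℝ) ^ (-b) =
      (∑ s ∈ Finset.range (i+1), wt a i s * (s:ℝ) ^ (-b)) +
      ∑ s ∈ Finset.Ico (i+1) M, wt a i s * (s:ℝ) ^ (-b) := by
    rw [Finset.range_eq_Ico, Finset.range_eq_Ico]
    exact (Finset.sum_Ico_consecutive _ (Nat.zero_le (i+1)) hiM).symm
  -- Part A
  have hA : ∑ s ∈ Finset.range (i+1), wt a i s * (s:ℝ) ^ (-b) ≤ (i:ℝ)^(-b) / (1-a-b) := by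
    have htermA : ∀ s ∈ Finset.range (i+1), wt a i s * (s:ℝ) ^ (-b) =
        (i:ℝ) ^ (a-1) * (s:ℝ) ^ (-(a+b)) := by
      intro s hs
      rcases Nat.eq_zero_or_pos s with rfl | hs1
      · rw [wt, _root_.min_zero, max_eq_left (Nat.zero_le i), Nat.cast_zero, Real.zero_rpow (ne_of_gt ha0), zero_mul,
          div_zero, zero_mul, Real.zero_rpow (show -(a+b) ≠ 0 from ne_of_lt (by linarith)),
          mul_zero]
      · have hsi : s ≤ i := by
          have := Finset.mem_range.mp hs; omega
        have hs0 : (0:ℝ) < s := by exact_mod_cast hs1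
        rw [wt, min_eq_right hsi, max_eq_left hsi]
        rw [show -(a+b) = -a + -b by ring, Real.rpow_add hs0,
          Real.rpow_neg hs0.le a, show a - 1 = -(1-a) by ring,
          Real.rpow_neg hi0.le (1-a), one_div, mul_inv]
        ring
    rw [Finset.sum_congr rfl htermA, ← Finset.mul_sum]
    have hT := T1 hc0 (by linarith) i
    have hpos : (0:ℝ) ≤ (i:ℝ)^(a-1) := (Real.rpow_pos_of_pos hi0 _).le
    calc (i:ℝ)^(a-1) * ∑ s ∈ Finset.range (i+1), (s:ℝ)^(-(a+b))
        ≤ (i:ℝ)^(a-1) * ((i:ℝ)^(1-(a+b)) / (1-(a+b))) := mul_le_mul_of_nonneg_left hT hpos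
      _ = (i:ℝ)^(-b) / (1-a-b) := by
          rw [mul_div_assoc', ← Real.rpow_add hi0]
          ring_nf
  -- Part B
  have hB : ∑ s ∈ Finset.Ico (i+1) M, wt a i s * (s:ℝ) ^ (-b) ≤ (i:ℝ)^(-b) / (b-a) := by
    have htermB : ∀ s ∈ Finset.Ico (i+1) M, wt a i s * (s:ℝ) ^ (-b) =
        (i:ℝ) ^ (-a) * (s:ℝ) ^ (-(1+(b-a))) := by
      intro s hs
      have his : i ≤ s := by
        have := (Finset.mem_Ico.mp hs).1; omega
      have hs0 : (0:ℝ) < s := by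
        have : 1 ≤ s := le_trans hi his; exact_mod_cast this
      rw [wt, min_eq_left his, max_eq_right his]
      rw [show -(1+(b-a)) = -(1-a) + -b by ring, Real.rpow_add hs0,
        Real.rpow_neg hs0.le (1-a), Real.rpow_neg hi0.le a, one_div, mul_inv]
      ring
    rw [Finset.sum_congr rfl htermB, ← Finset.mul_sum]
    have hT := T2 hba hba1 hi M
    have hpos : (0:ℝ) ≤ (i:ℝ)^(-a) := (Real.rpow_pos_of_pos hi0 _).le
    calc (i:ℝ)^(-a) * ∑ s ∈ Finset.Ico (i+1) M, (s:ℝ)^(-(1+(b-a)))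
        ≤ (i:ℝ)^(-a) * ((i:ℝ)^(-(b-a)) / (b-a)) := mul_le_mul_of_nonneg_left hT hpos
      _ = (i:ℝ)^(-b) / (b-a) := by
          rw [mul_div_assoc', ← Real.rpow_add hi0]
          ring_nf
  have hfin : (i:ℝ)^(-b)/(1-a-b) + (i:ℝ)^(-b)/(b-a) ≤ Cab a b * (i:ℝ)^(-b) := by
    have hip : (0:ℝ) < (i:ℝ)^(-b) := Real.rpow_pos_of_pos hi0 _
    have e1 : (i:ℝ)^(-b)/(1-a-b) = (1/(1-a-b)) * (i:ℝ)^(-b) := by ring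
    have e2 : (i:ℝ)^(-b)/(b-a) = (1/(b-a)) * (i:ℝ)^(-b) := by ring
    rw [e1, e2, Cab, ← add_mul]
    apply mul_le_mul_of_nonneg_right _ hip.le
    have h12 : 1/(1-a-b) ≤ 2/(1-a-b) := by
      rw [div_le_div_iff₀ h1ab h1ab]; nlinarith
    linarith
  linarith [hsub, hsplit ▸ hsub, hA, hB]

lemma BB_eq {b : ℝ} (hb : b ≠ 0) (hb1 : b ≠ 1) (m n : ℕ) :
    ENNReal.ofReal (1 / ((m:ℝ) ^ b * (n:ℝ) ^ (1-b))) = BB b m n := by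
  rw [BB, ← ENNReal.ofReal_mul (by positivity)]
  congr 1
  rw [Real.rpow_neg (Nat.cast_nonneg m), show b - 1 = -(1-b) by ring,
    Real.rpow_neg (Nat.cast_nonneg n), one_div, mul_inv]

include ha0 hab hab1 in
lemma L2E {i : ℕ} (hi : 1 ≤ i) :
    ∑' y : ℕ, pw a i y * ENNReal.ofReal ((y:ℝ) ^ (-b)) ≤
      ENNReal.ofReal (Cab a b) * ENNReal.ofReal ((i:ℝ) ^ (-b)) := by
  have hterm : ∀ y : ℕ, pw a i y * ENNReal.ofReal ((y:ℝ) ^ (-b)) =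
      ENNReal.ofReal (wt a i y * (y:ℝ) ^ (-b)) := by
    intro y; rw [pw, ← ENNReal.ofReal_mul (wt_nonneg a i y)]
  simp only [hterm]
  rw [← ENNReal.ofReal_mul (by
    have := hC1 ha0 hab hab1; linarith : (0:ℝ) ≤ Cab a b)]
  rw [ENNReal.tsum_eq_iSup_sum]
  apply iSup_le
  intro F
  obtain ⟨N, hN⟩ := F.exists_nat_subset_range
  calc ∑ y ∈ F, ENNReal.ofReal (wt a i y * (y:ℝ)^(-b))
      ≤ ∑ y ∈ Finset.range N, ENNReal.ofReal (wt a i y * (y:ℝ)^(-b)) :=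
        Finset.sum_le_sum_of_subset hN
    _ = ENNReal.ofReal (∑ y ∈ Finset.range N, wt a i y * (y:ℝ)^(-b)) :=
        (ENNReal.ofReal_sum_of_nonneg (fun y _ => term_nonneg a i y)).symm
    _ ≤ ENNReal.ofReal (Cab a b * (i:ℝ)^(-b)) :=
        ENNReal.ofReal_le_ofReal (L2 ha0 hab hab1 hi N)

set_option maxHeartbeats 1000000 in
include ha0 hab hab1 in
lemma MAIN : ∀ k, 1 ≤ k → ∀ i t : ℕ, 1 ≤ i → 1 ≤ t →
    ∑' s : Fin (k+1) → ℕ, FF a i t k s ≤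
      (ENNReal.ofReal (Cab a b)) ^ k * BB b i t := by
  have hb0 : b ≠ 0 := by intro h; subst h; linarith
  have hb1 : b ≠ 1 := by intro h; subst h; linarith
  have hCnn : (0:ℝ) ≤ Cab a b := by have := hC1 ha0 hab hab1; linarith
  intro k hk
  induction k, hk using Nat.le_induction with
  | base =>
    intro i t hi ht
    have hsingle : ∑' s : Fin 2 → ℕ, FF a i t 1 s = FF a i t 1 ![i, t] := by
      apply tsum_eq_single
      intro s hs
      rw [FF, if_neg]
      intro ⟨h0, h1⟩
      apply hs
      funext j
      fin_cases j
      · exact h0.trans (Matrix.cons_val_zero i ![t]).symm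
      · refine Eq.trans ?_ (Matrix.cons_val_one ..).symm
        exact h1
    rw [hsingle, FF, if_pos ⟨Matrix.cons_val_zero i ![t],
      by rw [show (Fin.last 1) = (1 : Fin 2) from rfl]; exact Matrix.cons_val_one _ _⟩]
    rw [Fin.prod_univ_one]
    have h0 : (![i, t] : Fin 2 → ℕ) ((0 : Fin 1).castSucc) = i := rfl
    have h1 : (![i, t] : Fin 2 → ℕ) ((0 : Fin 1).succ) = t := rfl
    rw [h0, h1, pow_one, ← BB_eq hb0 hb1, pw,
      ← ENNReal.ofReal_mul hCnn]
    exact ENNReal.ofReal_le_ofReal (L1 ha0 hab hab1 hi ht)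
  | succ k hk IH =>
    intro i t hi ht
    have e1 : ∑' s : Fin (k+2) → ℕ, FF a i t (k+1) s =
        ∑' p : ℕ × (Fin (k+1) → ℕ), FF a i t (k+1) (Fin.cons p.1 p.2) := by
      rw [← Equiv.tsum_eq (Fin.consEquiv (fun _ : Fin (k+2) => ℕ)) (FF a i t (k+1))]
      rfl
    rw [e1, ENNReal.tsum_prod']
    simp only [FF_cons]
    rw [tsum_eq_single i (by intro x hx; simp [hx])]
    simp only [eq_self_iff_true, if_true]
    -- now : ∑' f : Fin (k+1) → ℕ, pw a i (f 0) * FF a (f 0) t k f ≤ ...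
    have e2 : ∑' f : Fin (k+1) → ℕ, pw a i (f 0) * FF a (f 0) t k f =
        ∑' y : ℕ, ∑' g : Fin k → ℕ, pw a i y * FF a y t k (Fin.cons y g) := by
      rw [← Equiv.tsum_eq (Fin.consEquiv (fun _ : Fin (k+1) => ℕ))
        (fun f => pw a i (f 0) * FF a (f 0) t k f), ENNReal.tsum_prod']
      simp only [Fin.consEquiv, Equiv.coe_fn_mk, Fin.cons_zero]
    rw [e2]
    have step : ∀ y : ℕ, ∑' g : Fin k → ℕ, pw a i y * FF a y t k (Fin.cons y g) ≤
        pw a i y * ((ENNReal.ofReal (Cab a b)) ^ k * BB b y t) := by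
      intro y
      rcases Nat.eq_zero_or_pos y with rfl | hy
      · simp [pw_zero_right ha0]
      · rw [ENNReal.tsum_mul_left]
        apply mul_le_mul_right
        calc ∑' g : Fin k → ℕ, FF a y t k (Fin.cons y g)
            ≤ ∑' y' : ℕ, ∑' g : Fin k → ℕ, FF a y t k (Fin.cons y' g) :=
              ENNReal.le_tsum y
          _ = ∑' f : Fin (k+1) → ℕ, FF a y t k f := by
              rw [← Equiv.tsum_eq (Fin.consEquiv (fun _ : Fin (k+1) => ℕ)) (FF a y t k),
                ENNReal.tsum_prod']
              rfl
          _ ≤ (ENNReal.ofReal (Cab a b)) ^ k * BB b y t := IH y t hy ht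
    calc ∑' y : ℕ, ∑' g : Fin k → ℕ, pw a i y * FF a y t k (Fin.cons y g)
        ≤ ∑' y : ℕ, pw a i y * ((ENNReal.ofReal (Cab a b)) ^ k * BB b y t) :=
          ENNReal.tsum_le_tsum step
      _ = (ENNReal.ofReal (Cab a b)) ^ k * ENNReal.ofReal ((t:ℝ)^(b-1)) *
          ∑' y : ℕ, pw a i y * ENNReal.ofReal ((y:ℝ)^(-b)) := by
          rw [← ENNReal.tsum_mul_left]
          apply tsum_congr
          intro y
          rw [BB]
          ring
      _ ≤ (ENNReal.ofReal (Cab a b)) ^ k * ENNReal.ofReal ((t:ℝ)^(b-1)) *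
          (ENNReal.ofReal (Cab a b) * ENNReal.ofReal ((i:ℝ)^(-b))) :=
          mul_le_mul_right (L2E ha0 hab hab1 hi) _
      _ = (ENNReal.ofReal (Cab a b)) ^ (k+1) * BB b i t := by
          rw [BB, pow_succ]
          ring

end main

/-- **A bound on f_k.**
Fix a ∈ (0,1/2). For every b > a with a + b < 1, setting
C_{a,b} = 1/(b−a) + 2/(1−a−b), for all integers 1 ≤ i < t and all k ≥ 1 one has
f_k(i,t) ≤ C_{a,b}^k / (i^b t^{1−b}), where f_k(i,t) is the sum over all sequences
(s₀,…,s_k) of distinct positive integers with s₀ = i, s_k = t of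
∏_{j<k} (min(s_j,s_{j+1}))^{-a} (max(s_j,s_{j+1}))^{-(1-a)}. -/
theorem fk_bound (a b : ℝ) (ha0 : 0 < a) (ha : a < 1 / 2) (hab : a < b)
    (hab1 : a + b < 1) (i t : ℕ) (hi : 1 ≤ i) (hit : i < t) (k : ℕ) (hk : 1 ≤ k) :
    (∑' s : {s : Fin (k + 1) → ℕ // Function.Injective s ∧ s 0 = i ∧
        s (Fin.last k) = t ∧ ∀ j, 1 ≤ s j},
      ∏ j : Fin k,
        1 / (((min (s.1 j.castSucc) (s.1 j.succ) : ℕ) : ℝ) ^ a *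
          ((max (s.1 j.castSucc) (s.1 j.succ) : ℕ) : ℝ) ^ (1 - a))) ≤
      (1 / (b - a) + 2 / (1 - a - b)) ^ k / ((i : ℝ) ^ b * (t : ℝ) ^ (1 - b)) := by
  classical
  have ht1 : 1 ≤ t := le_trans hi hit.le
  have hb0 : b ≠ 0 := by intro h; subst h; linarith
  have hb1 : b ≠ 1 := by intro h; subst h; linarith
  have hCnn : (0:ℝ) ≤ Cab a b := by have := hC1 ha0 hab hab1; linarith
  have hi0 : (0:ℝ) < i := by exact_mod_cast hi
  have ht0 : (0:ℝ) < t := by exact_mod_cast lt_of_le_of_lt (Nat.zero_le i) hit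
  have hR0 : (0:ℝ) ≤ (1 / (b - a) + 2 / (1 - a - b)) ^ k / ((i : ℝ) ^ b * (t : ℝ) ^ (1 - b)) := by
    apply div_nonneg (pow_nonneg hCnn k)
    positivity
  set A : Set (Fin (k + 1) → ℕ) := {s | Function.Injective s ∧ s 0 = i ∧
      s (Fin.last k) = t ∧ ∀ j, 1 ≤ s j} with hA
  have hchg : (∑' s : {s : Fin (k + 1) → ℕ // Function.Injective s ∧ s 0 = i ∧
        s (Fin.last k) = t ∧ ∀ j, 1 ≤ s j},
      ∏ j : Fin k,
        1 / (((min (s.1 j.castSucc) (s.1 j.succ) : ℕ) : ℝ) ^ a *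
          ((max (s.1 j.castSucc) (s.1 j.succ) : ℕ) : ℝ) ^ (1 - a))) =
      ∑' s : ↥A, ∏ j : Fin k, wt a (s.1 j.castSucc) (s.1 j.succ) := rfl
  rw [hchg]
  by_cases hsum : Summable (fun s : ↥A => ∏ j : Fin k, wt a (s.1 j.castSucc) (s.1 j.succ))
  swap
  · rw [tsum_eq_zero_of_not_summable hsum]; exact hR0
  have hofr : ENNReal.ofReal (∑' s : ↥A, ∏ j : Fin k, wt a (s.1 j.castSucc) (s.1 j.succ)) =
      ∑' s : ↥A, ENNReal.ofReal (∏ j : Fin k, wt a (s.1 j.castSucc) (s.1 j.succ)) :=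
    ENNReal.ofReal_tsum_of_nonneg
      (fun s => Finset.prod_nonneg (fun j _ => wt_nonneg a _ _)) hsum
  have hprodE : ∀ s : ↥A, ENNReal.ofReal (∏ j : Fin k, wt a (s.1 j.castSucc) (s.1 j.succ)) =
      ∏ j : Fin k, pw a (s.1 j.castSucc) (s.1 j.succ) := fun s =>
    ENNReal.ofReal_prod_of_nonneg (fun j _ => wt_nonneg a _ _)
  have hle1 : (∑' s : ↥A, ∏ j : Fin k, pw a (s.1 j.castSucc) (s.1 j.succ)) ≤
      ∑' s : Fin (k+1) → ℕ, FF a i t k s := by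
    rw [tsum_subtype A (fun s => ∏ j : Fin k, pw a (s j.castSucc) (s j.succ))]
    apply ENNReal.tsum_le_tsum
    intro s
    by_cases hs : s ∈ A
    · rw [Set.indicator_of_mem hs, FF, if_pos ⟨hs.2.1, hs.2.2.1⟩]
    · rw [Set.indicator_of_notMem hs]; exact zero_le
  have hmain := MAIN ha0 hab hab1 k hk i t hi ht1
  have hchain : ENNReal.ofReal (∑' s : ↥A, ∏ j : Fin k, wt a (s.1 j.castSucc) (s.1 j.succ)) ≤
      ENNReal.ofReal ((1 / (b - a) + 2 / (1 - a - b)) ^ k /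
        ((i : ℝ) ^ b * (t : ℝ) ^ (1 - b))) := by
    rw [hofr]
    calc ∑' s : ↥A, ENNReal.ofReal (∏ j : Fin k, wt a (s.1 j.castSucc) (s.1 j.succ))
        = ∑' s : ↥A, ∏ j : Fin k, pw a (s.1 j.castSucc) (s.1 j.succ) := tsum_congr hprodE
      _ ≤ ∑' s : Fin (k+1) → ℕ, FF a i t k s := hle1
      _ ≤ (ENNReal.ofReal (Cab a b)) ^ k * BB b i t := hmain
      _ = ENNReal.ofReal ((1 / (b - a) + 2 / (1 - a - b)) ^ k /
            ((i : ℝ) ^ b * (t : ℝ) ^ (1 - b))) := by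
          rw [← BB_eq hb0 hb1, ← ENNReal.ofReal_pow hCnn,
            ← ENNReal.ofReal_mul (pow_nonneg hCnn k), mul_one_div]
          rfl
  exact (ENNReal.ofReal_le_ofReal_iff hR0).mp hchain
end

section
/- Let e, t be positive integers and q ∈ [0,1] with e·q ≤ 1. Let X₁,…,X_t be independent identically distributed random variables with values in {0,1,…,e}, where P(X_j = i) = q for each i ∈ {1,…,e} and P(X_j = 0) = 1 − e·q. Let M = #{i ∈ {1,…,e} : ∃ j ∈ {1,…,t} with X_j = i} be the number of cells in {1,…,e} hit by at least one trial. Then E[M] = e(1 − (1−q)^t) and Var(M) ≤ E[M]. -/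
open MeasureTheory ProbabilityTheory


private lemma multinomial_aux (e t : ℕ) (he : 1 ≤ e) (q a : ℝ) (hq0 : 0 ≤ q)
    (hq1 : (e:ℝ)*q ≤ 1) (ha : a = (1-q)^t) (ha0 : 0 ≤ a) (ha1 : a ≤ 1) :
    (e:ℝ)*(1-a) + (e:ℝ)*((e:ℝ)-1)*(1 - 2*a + (1-2*q)^t) - ((e:ℝ)*(1-a))^2 ≤ (e:ℝ)*(1-a) := by
  by_cases hcase : e = 1
  · subst hcase; push_cast; nlinarith [sq_nonneg (1-a)]
  · have he1 : (1:ℝ) ≤ (e:ℝ) := by exact_mod_cast he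
    have he2 : (2:ℝ) ≤ (e:ℝ) := by exact_mod_cast (by omega : 2 ≤ e)
    have h2q : 2*q ≤ 1 := by nlinarith
    have h2q0 : 0 ≤ 1 - 2*q := by linarith
    have hb : (1-2*q)^t ≤ a^2 := by
      calc (1-2*q)^t ≤ ((1-q)^2)^t := pow_le_pow_left₀ h2q0 (by nlinarith) t
        _ = a^2 := by rw [← pow_mul, mul_comm, pow_mul, ha]
    have key : 1 - 2*a + (1-2*q)^t ≤ (1-a)^2 := by nlinarith
    have h1 : (e:ℝ)*((e:ℝ)-1)*(1 - 2*a + (1-2*q)^t) ≤ (e:ℝ)*((e:ℝ)-1)*(1-a)^2 :=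
      mul_le_mul_of_nonneg_left key (by nlinarith)
    have h2 : (e:ℝ)*((e:ℝ)-1)*(1-a)^2 ≤ ((e:ℝ)*(1-a))^2 := by
      nlinarith [mul_nonneg (le_trans zero_le_one he1) (sq_nonneg (1-a))]
    linarith

/-- **Diameter multinomial graph (moment computation).**
Let e, t be positive integers and q ∈ [0,1] with e·q ≤ 1. Let X₁,…,X_t be i.i.d.
random variables with values in {0,1,…,e}, where P(X_j = i) = q for each
i ∈ {1,…,e} (and hence P(X_j = 0) = 1 − e·q). Let M be the number of cells in
{1,…,e} hit by at least one trial. Then E[M] = e(1 − (1−q)^t) and Var(M) ≤ E[M]. -/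
theorem multinomial_nonempty_cells {Ω : Type*} [MeasurableSpace Ω] (μ : Measure Ω)
    [IsProbabilityMeasure μ] (e t : ℕ) (he : 1 ≤ e) (ht : 1 ≤ t)
    (q : ℝ) (hq0 : 0 ≤ q) (hq1 : (e : ℝ) * q ≤ 1)
    (X : Fin t → Ω → ℕ) (hXmeas : ∀ j, Measurable (X j))
    (hXval : ∀ j ω, X j ω ≤ e)
    (hXdist : ∀ j : Fin t, ∀ i ∈ Finset.Icc 1 e,
      μ {ω | X j ω = i} = ENNReal.ofReal q)
    (hXindep : iIndepFun X μ) :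
    (∫ ω, ((((Finset.Icc 1 e).filter fun i => ∃ j, X j ω = i).card : ℝ)) ∂μ) =
        e * (1 - (1 - q) ^ t) ∧
      variance (fun ω => (((Finset.Icc 1 e).filter fun i => ∃ j, X j ω = i).card : ℝ)) μ ≤
        e * (1 - (1 - q) ^ t) := by
  classical
  have he1 : (1:ℝ) ≤ (e:ℝ) := by exact_mod_cast he
  have hqe1 : q ≤ 1 := by nlinarith
  have h1q0 : 0 ≤ 1 - q := by linarith
  set a : ℝ := (1 - q) ^ t with ha_def
  have ha0 : 0 ≤ a := pow_nonneg h1q0 t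
  have ha1 : a ≤ 1 := pow_le_one₀ h1q0 (by linarith)
  -- events
  set E : ℕ → Set Ω := fun i => ⋃ j, X j ⁻¹' {i} with hE_def
  have hEmeas : ∀ i, MeasurableSet (E i) := fun i =>
    MeasurableSet.iUnion fun j => (hXmeas j) (measurableSet_singleton i)
  -- product formula
  have hprod : ∀ (s : Set ℕ), MeasurableSet s →
      μ (⋂ j, X j ⁻¹' s) = ∏ j : Fin t, μ (X j ⁻¹' s) := fun s hs =>
    hXindep.meas_iInter (fun j => ⟨s, hs, rfl⟩)
  -- single-cell probabilities
  have hXi : ∀ (j : Fin t), ∀ i ∈ Finset.Icc 1 e, μ (X j ⁻¹' {i}) = ENNReal.ofReal q := by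
    intro j i hi
    have h := hXdist j i hi
    exact h
  have hsingle : ∀ i ∈ Finset.Icc 1 e, μ ((E i)ᶜ) = ENNReal.ofReal (1 - q) ^ t := by
    intro i hi
    have hc : (E i)ᶜ = ⋂ j, X j ⁻¹' ({i}ᶜ) := by
      simp [hE_def, Set.compl_iUnion]
    rw [hc, hprod _ (measurableSet_singleton i).compl]
    have hj : ∀ j : Fin t, μ (X j ⁻¹' ({i}ᶜ)) = ENNReal.ofReal (1 - q) := by
      intro j
      rw [Set.preimage_compl,
        measure_compl ((hXmeas j) (measurableSet_singleton i)) (measure_ne_top μ _),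
        hXi j i hi, measure_univ, ← ENNReal.ofReal_one, ← ENNReal.ofReal_sub _ hq0]
    rw [Finset.prod_congr rfl (fun j _ => hj j), Finset.prod_const, Finset.card_univ,
      Fintype.card_fin]
  have hmeasE : ∀ i ∈ Finset.Icc 1 e, (μ (E i)).toReal = 1 - a := by
    intro i hi
    have h1 : μ (E i) = 1 - ENNReal.ofReal (1 - q) ^ t := by
      rw [← hsingle i hi, ← prob_compl_eq_one_sub (hEmeas i).compl, compl_compl]
    have hle : ENNReal.ofReal (1 - q) ^ t ≤ 1 :=
      pow_le_one' (ENNReal.ofReal_le_one.2 (by linarith)) t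
    rw [h1, ENNReal.toReal_sub_of_le hle ENNReal.one_ne_top]
    simp [← ENNReal.ofReal_pow h1q0, ENNReal.toReal_ofReal (pow_nonneg h1q0 t)]
    exact ha_def.symm
  -- pair probabilities
  have hinter : ∀ i ∈ Finset.Icc 1 e, ∀ i' ∈ Finset.Icc 1 e, i ≠ i' →
      (μ (E i ∩ E i')).toReal = 1 - 2 * a + (1 - 2 * q) ^ t := by
    intro i hi i' hi' hne
    have he2 : (2:ℝ) ≤ (e:ℝ) := by
      have h2 : 2 ≤ e := by
        simp only [Finset.mem_Icc] at hi hi'; omega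
      exact_mod_cast h2
    have h2q : 2 * q ≤ 1 := by nlinarith
    have h2q0 : 0 ≤ 1 - 2 * q := by linarith
    -- union complement
    have hcup : (E i ∪ E i')ᶜ = ⋂ j, X j ⁻¹' (({i} ∪ {i'} : Set ℕ)ᶜ) := by
      ext ω
      simp only [hE_def, Set.mem_compl_iff, Set.mem_union, Set.mem_iUnion, Set.mem_iInter,
        Set.mem_preimage, Set.mem_singleton_iff, not_or, not_exists, forall_and]
    have hmcup : μ ((E i ∪ E i')ᶜ) = ENNReal.ofReal (1 - 2 * q) ^ t := by
      rw [hcup, hprod _ ((measurableSet_singleton i).union (measurableSet_singleton i')).compl]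
      have hj : ∀ j : Fin t, μ (X j ⁻¹' (({i} ∪ {i'} : Set ℕ)ᶜ)) = ENNReal.ofReal (1 - 2 * q) := by
        intro j
        have hd : Disjoint (X j ⁻¹' {i}) (X j ⁻¹' {i'}) :=
          (Set.disjoint_singleton.2 hne).preimage _
        have hu : μ (X j ⁻¹' ({i} ∪ {i'} : Set ℕ)) = ENNReal.ofReal (2 * q) := by
          rw [Set.preimage_union, measure_union hd ((hXmeas j) (measurableSet_singleton i')),
            hXi j i hi, hXi j i' hi', ← ENNReal.ofReal_add hq0 hq0]
          ring_nf
        rw [Set.preimage_compl,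
          measure_compl ((hXmeas j) ((measurableSet_singleton i).union (measurableSet_singleton i'))) (measure_ne_top μ _),
          hu, measure_univ, ← ENNReal.ofReal_one, ← ENNReal.ofReal_sub _ (by linarith : (0:ℝ) ≤ 2 * q)]
      rw [Finset.prod_congr rfl (fun j _ => hj j), Finset.prod_const, Finset.card_univ,
        Fintype.card_fin]
    have hmcupR : (μ (E i ∪ E i')).toReal = 1 - (1 - 2 * q) ^ t := by
      have h1 : μ (E i ∪ E i') = 1 - ENNReal.ofReal (1 - 2 * q) ^ t := by
        rw [← hmcup, ← prob_compl_eq_one_sub ((hEmeas i).union (hEmeas i')).compl, compl_compl]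
      have hle : ENNReal.ofReal (1 - 2 * q) ^ t ≤ 1 :=
        pow_le_one' (ENNReal.ofReal_le_one.2 (by linarith)) t
      rw [h1, ENNReal.toReal_sub_of_le hle ENNReal.one_ne_top]
      simp [← ENNReal.ofReal_pow h2q0, ENNReal.toReal_ofReal (pow_nonneg h2q0 t)]
    have hadd : μ (E i ∪ E i') + μ (E i ∩ E i') = μ (E i) + μ (E i') :=
      measure_union_add_inter _ (hEmeas i')
    have haddR : (μ (E i ∪ E i')).toReal + (μ (E i ∩ E i')).toReal
        = (μ (E i)).toReal + (μ (E i')).toReal := by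
      rw [← ENNReal.toReal_add (measure_ne_top μ _) (measure_ne_top μ _),
        ← ENNReal.toReal_add (measure_ne_top μ _) (measure_ne_top μ _), hadd]
    rw [hmeasE i hi, hmeasE i' hi', hmcupR] at haddR
    linarith
  -- indicator functions
  set f : ℕ → Ω → ℝ := fun i => (E i).indicator 1 with hf_def
  have hfmeas : ∀ i, Measurable (f i) := fun i => measurable_const.indicator (hEmeas i)
  have hfint : ∀ i, Integrable (f i) μ := fun i => (integrable_const 1).indicator (hEmeas i)
  have hfi : ∀ i ∈ Finset.Icc 1 e, ∫ ω, f i ω ∂μ = 1 - a := by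
    intro i hi
    have : ∫ ω, f i ω ∂μ = (μ (E i)).toReal • (1:ℝ) := by
      rw [hf_def]
      exact integral_indicator_const (1:ℝ) (hEmeas i)
    rw [this, smul_eq_mul, mul_one, hmeasE i hi]
  have hM : ∀ ω, ((Finset.filter (fun i => ∃ j, X j ω = i) (Finset.Icc 1 e)).card : ℝ)
      = ∑ i ∈ Finset.Icc 1 e, f i ω := by
    intro ω
    rw [Finset.card_filter]
    push_cast
    refine Finset.sum_congr rfl fun i _ => ?_
    simp [hf_def, hE_def, Set.indicator_apply, Set.mem_iUnion]
  have hcard : ((Finset.Icc 1 e).card : ℝ) = e := by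
    simp [Nat.card_Icc]
  have hEM : (∫ ω, ((Finset.filter (fun i => ∃ j, X j ω = i) (Finset.Icc 1 e)).card : ℝ) ∂μ)
      = e * (1 - a) := by
    calc (∫ ω, ((Finset.filter (fun i => ∃ j, X j ω = i) (Finset.Icc 1 e)).card : ℝ) ∂μ)
        = ∫ ω, ∑ i ∈ Finset.Icc 1 e, f i ω ∂μ := by simp only [hM]
      _ = ∑ i ∈ Finset.Icc 1 e, ∫ ω, f i ω ∂μ := integral_finset_sum _ (fun i _ => hfint i)
      _ = ∑ i ∈ Finset.Icc 1 e, (1 - a) := Finset.sum_congr rfl hfi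
      _ = e * (1 - a) := by rw [Finset.sum_const, nsmul_eq_mul, hcard]
  refine ⟨hEM, ?_⟩
  -- products of indicators
  have hmul : ∀ i i' ω, f i ω * f i' ω = (E i ∩ E i').indicator (1 : Ω → ℝ) ω := by
    intro i i' ω
    simp only [hf_def, Set.indicator_apply, Set.mem_inter_iff, Pi.one_apply]
    by_cases h1 : ω ∈ E i <;> by_cases h2 : ω ∈ E i' <;> simp [h1, h2]
  have hintint : ∀ i i', Integrable (fun ω => f i ω * f i' ω) μ := by
    intro i i'
    have : (fun ω => f i ω * f i' ω) = (E i ∩ E i').indicator (1 : Ω → ℝ) := funext (hmul i i')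
    rw [this]
    exact (integrable_const 1).indicator ((hEmeas i).inter (hEmeas i'))
  have hintmul : ∀ i i', ∫ ω, f i ω * f i' ω ∂μ = (μ (E i ∩ E i')).toReal := by
    intro i i'
    simp only [hmul]
    have : ∫ ω, (E i ∩ E i').indicator (1 : Ω → ℝ) ω ∂μ = (μ (E i ∩ E i')).toReal • (1:ℝ) :=
      integral_indicator_const (1:ℝ) ((hEmeas i).inter (hEmeas i'))
    rw [this, smul_eq_mul, mul_one]
  -- second moment
  set c : ℝ := 1 - 2 * a + (1 - 2 * q) ^ t with hc_def
  have hE2 : ∫ ω, (∑ i ∈ Finset.Icc 1 e, f i ω) ^ 2 ∂μ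
      = e * (1 - a) + e * ((e : ℝ) - 1) * c := by
    have hsq : ∀ ω, (∑ i ∈ Finset.Icc 1 e, f i ω) ^ 2
        = ∑ i ∈ Finset.Icc 1 e, ∑ i' ∈ Finset.Icc 1 e, f i ω * f i' ω := by
      intro ω; rw [sq, Finset.sum_mul_sum]
    simp only [hsq]
    rw [integral_finset_sum _ (fun i _ =>
      integrable_finset_sum _ (fun i' _ => hintint i i'))]
    have hrow : ∀ i ∈ Finset.Icc 1 e,
        (∫ ω, ∑ i' ∈ Finset.Icc 1 e, f i ω * f i' ω ∂μ) = (1 - a) + ((e : ℝ) - 1) * c := by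
      intro i hi
      rw [integral_finset_sum _ (fun i' _ => hintint i i'),
        Finset.sum_congr rfl (fun i' _ => hintmul i i'), ← Finset.add_sum_erase _ _ hi]
      have hdiag : (μ (E i ∩ E i)).toReal = 1 - a := by
        rw [Set.inter_self]; exact hmeasE i hi
      have hoff : ∀ i' ∈ (Finset.Icc 1 e).erase i, (μ (E i ∩ E i')).toReal = c := by
        intro i' hi'
        obtain ⟨hne, hmem⟩ := Finset.mem_erase.1 hi'
        exact hinter i hi i' hmem (Ne.symm hne)
      rw [Finset.sum_congr rfl hoff, Finset.sum_const, nsmul_eq_mul,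
        Finset.card_erase_of_mem hi, hdiag]
      have : (((Finset.Icc 1 e).card - 1 : ℕ) : ℝ) = (e : ℝ) - 1 := by
        rw [Nat.cast_sub (by simp [Nat.card_Icc, he])]
        simp [Nat.card_Icc]
      rw [this]
    rw [Finset.sum_congr rfl hrow, Finset.sum_const, nsmul_eq_mul, hcard]
    ring
  -- Memℒp
  have hMfun : (fun ω => ((Finset.filter (fun i => ∃ j, X j ω = i) (Finset.Icc 1 e)).card : ℝ))
      = fun ω => ∑ i ∈ Finset.Icc 1 e, f i ω := funext hM
  have hMmeas : Measurable (fun ω => ∑ i ∈ Finset.Icc 1 e, f i ω) :=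
    Finset.measurable_sum _ (fun i _ => hfmeas i)
  have hMemp : MemLp (fun ω => ∑ i ∈ Finset.Icc 1 e, f i ω) 2 μ := by
    apply MemLp.of_bound hMmeas.aestronglyMeasurable (e : ℝ)
    filter_upwards with ω
    rw [← hM ω, Real.norm_eq_abs, abs_of_nonneg (by positivity)]
    exact_mod_cast (Finset.card_filter_le _ _).trans (le_of_eq (by simp [Nat.card_Icc]))
  rw [hMfun, variance_eq_sub hMemp]
  have hpow2 : (fun ω => ∑ i ∈ Finset.Icc 1 e, f i ω) ^ 2
      = fun ω => (∑ i ∈ Finset.Icc 1 e, f i ω) ^ 2 := rfl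
  rw [hpow2]
  have hEMf : ∫ ω, (∑ i ∈ Finset.Icc 1 e, f i ω) ∂μ = e * (1 - a) := by
    rw [← hMfun]; exact hEM
  rw [hE2, hEMf]
  -- final inequality
  rw [hc_def]
  exact multinomial_aux e t he q a hq0 hq1 ha_def ha0 ha1
end
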